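/- arXiv:1512.01842 — 3 statements merged into one kernel-verified Lean document; each statement's English description precedes it below -/
import Mathlib

section
/- For every A ∈ SL(2,ℝ) and every natural number n, the translation length satisfies ℓ(Aⁿ) = n·ℓ(A), where ℓ(A) = inf_{z∈ℍ} dist(A·z, z). -/
open scoped UpperHalfPlane MatrixGroups

/-- The translation length of `A ∈ SL(2,ℝ)` acting on the hyperbolic plane:
`ℓ(A) = inf_{z ∈ ℍ} dist (A • z) z`. -/
noncomputable def translationLength (A : SL(2, ℝ)) : ℝ :=
  ⨅ z : ℍ, dist (A • z) z

open UpperHalfPlane Real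

noncomputable def gfun (A : SL(2,ℝ)) (z : ℍ) : ℝ :=
  ‖(-((A 1 0 : ℝ):ℂ) * (z:ℂ)^2
      + (((A 0 0 : ℝ):ℂ) - ((A 1 1 : ℝ):ℂ)) * (z:ℂ) + ((A 0 1 : ℝ):ℂ))‖ / (2 * z.im)

lemma den_ne (A : SL(2,ℝ)) (z : ℍ) : ((A 1 0 : ℝ):ℂ) * z + A 1 1 ≠ 0 := by
  intro h
  have him := congrArg Complex.im h
  simp [UpperHalfPlane.coe_im] at him
  rcases him with h1 | h1
  · have hre := congrArg Complex.re h
    simp [h1] at hre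
    have hdet := A.2
    rw [Matrix.det_fin_two] at hdet
    rw [h1, hre] at hdet
    simp at hdet
  · exact absurd h1 z.im_ne_zero

lemma dist_smul_eq (A : SL(2,ℝ)) (z : ℍ) :
    dist (A • z) z = 2 * arsinh (gfun A z) := by
  set a := A 0 0; set b := A 0 1; set c := A 1 0; set d := A 1 1
  have hden : ((c : ℝ):ℂ) * z + d ≠ 0 := den_ne A z
  have hdet : a * d - b * c = 1 := by
    have := A.2; rwa [Matrix.det_fin_two] at this
  have hcoe : ((A • z : ℍ) : ℂ) = ((a:ℂ) * z + b) / ((c:ℂ) * z + d) := by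
    rw [UpperHalfPlane.specialLinearGroup_apply]; simp; rfl
  have him : (A • z).im = z.im / Complex.normSq ((c:ℂ) * z + d) := by
    rw [← UpperHalfPlane.coe_im, hcoe, Complex.div_im, div_sub_div_same]
    congr 1
    simp
    linear_combination z.im * hdet
  rw [UpperHalfPlane.dist_eq]
  congr 1
  rw [Complex.dist_eq, hcoe, him, gfun]
  rw [div_sub' hden, norm_div]
  have h1 : √(z.im / Complex.normSq ((c:ℂ) * z + d) * z.im)
      = z.im / ‖((c:ℂ) * z + d)‖ := by
    rw [div_mul_eq_mul_div, ← sq, Real.sqrt_div (sq_nonneg _),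
      Real.sqrt_sq z.im_pos.le, Complex.norm_def]
  rw [h1]
  have habs : ‖((c:ℂ) * z + d)‖ ≠ 0 := by
    simpa using hden
  have hnum : ((a:ℂ) * z + b - ((c:ℂ) * z + d) * z)
      = -((c : ℝ):ℂ) * (z:ℂ)^2 + (((a : ℝ):ℂ) - ((d : ℝ):ℂ)) * (z:ℂ) + ((b : ℝ):ℂ) := by
    ring
  rw [hnum]
  field_simp
  simp only [a, b, c, d]; ring_nf

lemma normSq_key (a b c d : ℝ) (ζ : ℂ) :
    Complex.normSq (-(c:ℂ)*ζ^2 + ((a:ℂ)-(d:ℂ))*ζ + (b:ℂ)) =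
      ((a+d)^2 - 4*(a*d - b*c))*ζ.im^2
        + (-c*ζ.re^2 + (a-d)*ζ.re + b - c*ζ.im^2)^2 := by
  simp [Complex.normSq_apply, Complex.add_re, Complex.add_im, Complex.mul_re,
    Complex.mul_im, Complex.sub_re, Complex.sub_im, pow_two]
  ring

lemma gfun_nonneg (A : SL(2,ℝ)) (z : ℍ) : 0 ≤ gfun A z :=
  div_nonneg (norm_nonneg _) (by positivity)

lemma gfun_lower (A : SL(2,ℝ)) (z : ℍ) :
    √(max ((A 0 0 + A 1 1)^2 - 4) 0) / 2 ≤ gfun A z := by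
  set a := A 0 0; set b := A 0 1; set c := A 1 0; set d := A 1 1
  have hdet : a * d - b * c = 1 := by
    have := A.2; rwa [Matrix.det_fin_two] at this
  have hy : 0 < z.im := z.im_pos
  rw [gfun, div_le_div_iff₀ (by norm_num) (by positivity), Complex.norm_def]
  have key := normSq_key a b c d (z:ℂ)
  rw [UpperHalfPlane.coe_im] at key
  calc √(max ((a+d)^2 - 4) 0) * (2 * z.im) = 2 * √(max ((a+d)^2 - 4) 0 * z.im^2) := by
        rw [Real.sqrt_mul (le_max_right _ _), Real.sqrt_sq hy.le]; ring
    _ ≤ 2 * √(Complex.normSq (-(c:ℂ)*(z:ℂ)^2 + ((a:ℂ)-(d:ℂ))*(z:ℂ) + (b:ℂ))) := by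
        gcongr
        rcases le_total ((a+d)^2 - 4) 0 with h | h
        · rw [max_eq_right h, zero_mul]
          exact Complex.normSq_nonneg _
        · rw [max_eq_left h, key]
          nlinarith [sq_nonneg (-c*(z:ℂ).re^2 + (a-d)*(z:ℂ).re + b - c*z.im^2), hdet]
    _ = √(Complex.normSq _) * 2 := by ring

lemma gfun_mk (A : SL(2,ℝ)) (x y : ℝ) (hy : 0 < y) :
    gfun A (UpperHalfPlane.mk ⟨x, y⟩ hy) =
      √(((A 0 0 + A 1 1)^2 - 4) * y^2
        + (-(A 1 0)*x^2 + (A 0 0 - A 1 1)*x + A 0 1 - (A 1 0)*y^2)^2) / (2*y) := by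
  set a := A 0 0; set b := A 0 1; set c := A 1 0; set d := A 1 1
  have hdet : a * d - b * c = 1 := by
    have := A.2; rwa [Matrix.det_fin_two] at this
  have h1 : ((UpperHalfPlane.mk ⟨x, y⟩ hy : ℍ) : ℂ) = ⟨x, y⟩ := rfl
  have h2 : (UpperHalfPlane.mk ⟨x, y⟩ hy : ℍ).im = y := rfl
  rw [gfun, h1, h2, Complex.norm_def, normSq_key]
  have h3 : (⟨x, y⟩ : ℂ).re = x := rfl
  have h4 : (⟨x, y⟩ : ℂ).im = y := rfl
  rw [h3, h4, hdet]
  norm_num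
  rfl

lemma iInf_gfun (A : SL(2,ℝ)) :
    (⨅ z : ℍ, gfun A z) = √(max ((A 0 0 + A 1 1)^2 - 4) 0) / 2 := by
  set a := A 0 0 with ha; set b := A 0 1 with hb; set c := A 1 0 with hc0; set d := A 1 1 with hd
  have hdet : a * d - b * c = 1 := by
    have := A.2; rwa [Matrix.det_fin_two] at this
  have hbdd : BddBelow (Set.range fun z : ℍ => gfun A z) := by
    refine ⟨0, ?_⟩
    rintro _ ⟨z, rfl⟩
    exact gfun_nonneg A z
  refine le_antisymm ?_ (le_ciInf (gfun_lower A))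
  set D := (a + d)^2 - 4 with hD
  rcases eq_or_ne c 0 with hc | hc
  · -- c = 0 : then D = (a-d)^2 ≥ 0
    have had : a * d = 1 := by rw [hc] at hdet; linarith [hdet]
    have hDad : D = (a - d)^2 := by rw [hD]; nlinarith [had]
    rcases eq_or_ne a d with he | he
    · -- a = d : D = 0, m = 0, gfun = |b|/(2y) → 0
      have hD0 : D = 0 := by rw [hDad, ← he]; ring
      rw [hD0, max_self, Real.sqrt_zero, zero_div]
      refine le_of_forall_pos_le_add fun ε hε => ?_
      have hy : (0:ℝ) < (|b| + 1) / ε := by positivity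
      refine ciInf_le_of_le hbdd (UpperHalfPlane.mk ⟨0, (|b| + 1)/ε⟩ hy) ?_
      rw [gfun_mk A 0 _ hy]
      rw [← ha, ← hb, ← hc0, ← hd, hc, ← he]
      have hz : -(0:ℝ)*0^2 + (a-a)*0 + b - 0*((|b|+1)/ε)^2 = b := by ring
      rw [hz]
      have h5 : (a + a)^2 - 4 = 0 := by
        have h := hD.symm.trans hD0
        rwa [← he] at h
      rw [h5, zero_mul, zero_add, Real.sqrt_sq_eq_abs, zero_add,
        div_le_iff₀ (by positivity)]
      have h6 : ε * (2 * ((|b| + 1) / ε)) = 2*(|b|+1) := by field_simp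
      rw [h6]
      linarith [abs_nonneg b]
    · -- a ≠ d : exact witness x = -b/(a-d), y = 1
      refine ciInf_le_of_le hbdd (UpperHalfPlane.mk ⟨-b/(a-d), 1⟩ one_pos) ?_
      rw [gfun_mk A _ _ one_pos, ← ha, ← hb, ← hc0, ← hd, hc, ← hD]
      have hsub : a - d ≠ 0 := sub_ne_zero.mpr he
      have hz : -(0:ℝ)*(-b/(a-d))^2 + (a-d)*(-b/(a-d)) + b - 0*1^2 = 0 := by
        field_simp
        ring
      rw [hz, max_eq_left (by rw [hDad]; positivity : (0:ℝ) ≤ D)]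
      norm_num
  · -- c ≠ 0
    rcases eq_or_ne D 0 with hD0 | hD0
    · -- D = 0 : m = 0, witness x = (a-d)/(2c), y = ε small
      rw [hD0, max_self, Real.sqrt_zero, zero_div]
      refine le_of_forall_pos_le_add fun ε hε => ?_
      have hy : (0:ℝ) < ε / |c| := by positivity
      refine ciInf_le_of_le hbdd (UpperHalfPlane.mk ⟨(a-d)/(2*c), ε/|c|⟩ hy) ?_
      rw [gfun_mk A _ _ hy, ← ha, ← hb, ← hc0, ← hd, ← hD]
      have he2 : (a-d)^2 + 4*(b*c) = D := by rw [hD]; nlinarith [hdet]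
      have hc' : (0:ℝ) < |c| := abs_pos.mpr hc
      have hval : -c*((a-d)/(2*c))^2 + (a-d)*((a-d)/(2*c)) + b - c*(ε/|c|)^2
          = ((a-d)^2 + 4*(b*c))/(4*c) - c*(ε/|c|)^2 := by
        field_simp
        ring
      rw [hval, he2, hD0, zero_mul, zero_add, zero_div, zero_sub, neg_sq,
        Real.sqrt_sq_eq_abs]
      have h7 : |c*(ε/|c|)^2| = ε^2/|c| := by
        rw [abs_mul, abs_of_nonneg (by positivity : (0:ℝ) ≤ (ε/|c|)^2)]
        field_simp
      rw [h7]
      have h8 : ε^2/|c| / (2*(ε/|c|)) = ε/2 := by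
        field_simp
      rw [h8]
      linarith
    · -- D ≠ 0 : exact witness x = (a-d)/(2c), y = √|D|/(2|c|)
      have hc' : (0:ℝ) < |c| := abs_pos.mpr hc
      have hDabs : (0:ℝ) < |D| := abs_pos.mpr hD0
      have hy : (0:ℝ) < √|D|/(2*|c|) := by positivity
      refine ciInf_le_of_le hbdd (UpperHalfPlane.mk ⟨(a-d)/(2*c), √|D|/(2*|c|)⟩ hy) ?_
      rw [gfun_mk A _ _ hy, ← ha, ← hb, ← hc0, ← hd, ← hD]
      have he2 : (a-d)^2 + 4*(b*c) = D := by rw [hD]; nlinarith [hdet]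
      have hsq : (√|D|/(2*|c|))^2 = |D|/(4*c^2) := by
        rw [div_pow, Real.sq_sqrt hDabs.le]
        congr 1
        rw [mul_pow, sq_abs]
        norm_num
      have hval : -c*((a-d)/(2*c))^2 + (a-d)*((a-d)/(2*c)) + b - c*(√|D|/(2*|c|))^2
          = (D - |D|)/(4*c) := by
        rw [hsq, ← he2]
        field_simp
        ring
      rw [hval]
      rcases le_or_gt 0 D with hDpos | hDneg
      · have habs : |D| = D := abs_of_nonneg hDpos
        have hDpos' : (0:ℝ) < D := lt_of_le_of_ne hDpos (Ne.symm hD0)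
        have hs : (0:ℝ) < √D := Real.sqrt_pos.mpr hDpos'
        rw [habs] at hsq
        rw [habs, sub_self, zero_div]
        have hval2 : D * (√D/(2*|c|))^2 + 0^2 = D^2/(4*c^2) := by
          rw [hsq]; field_simp; ring
        rw [hval2, max_eq_left hDpos]
        have h9 : √(D^2/(4*c^2)) = D/(2*|c|) := by
          rw [Real.sqrt_div (sq_nonneg D), Real.sqrt_sq hDpos]
          congr 1
          rw [show (4:ℝ)*c^2 = (2*|c|)^2 by rw [mul_pow, sq_abs]; norm_num,
            Real.sqrt_sq (by positivity)]
        rw [h9]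
        have h10 : (D/(2*|c|)) / (2*(√D/(2*|c|))) = √D/2 := by
          have hss := Real.mul_self_sqrt hDpos
          field_simp
          linear_combination (-1 : ℝ) * hss
        rw [h10]
      · have habs : |D| = -D := abs_of_neg hDneg
        have hval3 : D * (√|D|/(2*|c|))^2 + ((D - |D|)/(4*c))^2 = 0 := by
          rw [hsq, habs]
          field_simp
          ring
        rw [hval3, Real.sqrt_zero, zero_div]
        positivity

lemma translationLength_eq (A : SL(2,ℝ)) :
    translationLength A = 2 * arsinh (√(max ((A 0 0 + A 1 1)^2 - 4) 0) / 2) := by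
  rw [translationLength]
  have h1 : (fun z : ℍ => dist (A • z) z) = fun z => 2 * arsinh (gfun A z) := by
    funext z; exact dist_smul_eq A z
  rw [h1, ← iInf_gfun A]
  have hbdd : BddBelow (Set.range fun z : ℍ => gfun A z) := by
    refine ⟨0, ?_⟩
    rintro _ ⟨z, rfl⟩
    exact gfun_nonneg A z
  have hmono : Monotone (fun x : ℝ => 2 * arsinh x) := fun x y h => by
    dsimp only
    have := Real.arsinh_le_arsinh.mpr h
    linarith
  exact (hmono.map_ciInf_of_continuousAt
    ((continuous_const.mul Real.continuous_arsinh).continuousAt) hbdd).symm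

lemma CH2 (M : Matrix (Fin 2) (Fin 2) ℝ) :
    M * M = (M.trace) • M - (M.det) • (1 : Matrix (Fin 2) (Fin 2) ℝ) := by
  ext i j
  fin_cases i <;> fin_cases j <;>
    simp [Matrix.mul_apply, Fin.sum_univ_succ, Matrix.det_fin_two, Matrix.one_apply,
      Matrix.trace_fin_two] <;> ring

lemma trace_pow_rec (M : Matrix (Fin 2) (Fin 2) ℝ) (h : M.det = 1) (n : ℕ) :
    (M^(n+2)).trace = M.trace * (M^(n+1)).trace - (M^n).trace := by
  have hch : M * M = M.trace • M - (1 : Matrix (Fin 2) (Fin 2) ℝ) := by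
    rw [CH2, h, one_smul]
  have : M^(n+2) = M.trace • M^(n+1) - M^n := by
    calc M^(n+2) = M^n * (M * M) := by rw [pow_succ, pow_succ, mul_assoc]
      _ = M.trace • M^(n+1) - M^n := by
        rw [hch, Matrix.mul_sub, Matrix.mul_smul, mul_one, ← pow_succ]
  rw [this, Matrix.trace_sub, Matrix.trace_smul, smul_eq_mul]

lemma seq_cosh (t s ε : ℝ) (hε : ε = 1 ∨ ε = -1) (hts : t = ε * (2 * Real.cosh s))
    (T : ℕ → ℝ) (h0 : T 0 = 2) (h1 : T 1 = t)
    (hrec : ∀ k, T (k+2) = t * T (k+1) - T k) :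
    ∀ k, T k = ε^k * (2 * Real.cosh (k*s)) := by
  have key : ∀ k, T k = ε^k * (2 * Real.cosh (k*s))
      ∧ T (k+1) = ε^(k+1) * (2 * Real.cosh ((k+1)*s)) := by
    intro k
    induction k with
    | zero => exact ⟨by rw [h0]; simp, by rw [h1, hts]; push_cast; simp⟩
    | succ m ih =>
      obtain ⟨ih1, ih2⟩ := ih
      refine ⟨by exact_mod_cast ih2, ?_⟩
      rw [hrec m, ih1, ih2, hts]
      push_cast
      rw [show ((m:ℝ)+1+1)*s = ((m:ℝ)+1)*s + s by ring, Real.cosh_add,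
        show (m:ℝ)*s = ((m:ℝ)+1)*s - s by ring, Real.cosh_sub]
      rcases hε with rfl | rfl <;> ring
  exact fun k => (key k).1

lemma seq_cos (t θ : ℝ) (hts : t = 2 * Real.cos θ)
    (T : ℕ → ℝ) (h0 : T 0 = 2) (h1 : T 1 = t)
    (hrec : ∀ k, T (k+2) = t * T (k+1) - T k) :
    ∀ k, T k = 2 * Real.cos (k*θ) := by
  have key : ∀ k, T k = 2 * Real.cos (k*θ) ∧ T (k+1) = 2 * Real.cos ((k+1)*θ) := by
    intro k
    induction k with
    | zero => exact ⟨by rw [h0]; simp, by rw [h1, hts]; push_cast; simp⟩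
    | succ m ih =>
      obtain ⟨ih1, ih2⟩ := ih
      refine ⟨by exact_mod_cast ih2, ?_⟩
      rw [hrec m, ih1, ih2, hts]
      push_cast
      rw [show ((m:ℝ)+1+1)*θ = ((m:ℝ)+1)*θ + θ by ring, Real.cos_add,
        show (m:ℝ)*θ = ((m:ℝ)+1)*θ - θ by ring, Real.cos_sub]
      ring
  exact fun k => (key k).1


/-- For every `A ∈ SL(2,ℝ)` and every natural number `n`,
`ℓ(Aⁿ) = n · ℓ(A)`. -/
theorem translationLength_pow (A : SL(2, ℝ)) (n : ℕ) :
    translationLength (A ^ n) = (n : ℝ) * translationLength A := by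
  set t : ℝ := A 0 0 + A 1 1 with htdef
  set T : ℕ → ℝ := fun k => ((A^k : SL(2,ℝ)) 0 0 + (A^k : SL(2,ℝ)) 1 1) with hTdef
  have hTtr : ∀ k, T k = (((A : Matrix (Fin 2) (Fin 2) ℝ))^k).trace := by
    intro k
    rw [hTdef, Matrix.trace_fin_two, ← Matrix.SpecialLinearGroup.coe_pow]
  have hT0 : T 0 = 2 := by
    rw [hTtr 0]; simp [Matrix.trace_fin_two]
  have hT1 : T 1 = t := by
    rw [hTtr 1]; simp [Matrix.trace_fin_two, htdef]
  have hTrec : ∀ k, T (k+2) = t * T (k+1) - T k := by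
    intro k
    rw [hTtr, hTtr, hTtr, trace_pow_rec _ (Matrix.SpecialLinearGroup.det_coe A) k,
      htdef, Matrix.trace_fin_two]
  have htrlA : translationLength A = 2 * arsinh (√(max (t^2 - 4) 0) / 2) :=
    translationLength_eq A
  have htrlAn : translationLength (A^n) = 2 * arsinh (√(max ((T n)^2 - 4) 0) / 2) :=
    translationLength_eq (A^n)
  rcases le_or_gt (t^2) 4 with hell | hhyp
  · -- elliptic / parabolic : both sides vanish
    have hb1 : -2 ≤ t := by nlinarith
    have hb2 : t ≤ 2 := by nlinarith
    have hcos : t = 2 * Real.cos (Real.arccos (t/2)) := by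
      rw [Real.cos_arccos (by linarith) (by linarith)]; ring
    have hTn := seq_cos t _ hcos T hT0 hT1 hTrec n
    have hmax : max ((T n)^2 - 4) 0 = 0 := by
      refine max_eq_right ?_
      rw [hTn]
      nlinarith [Real.cos_sq_le_one ((n:ℝ) * Real.arccos (t/2))]
    have hmax' : max (t^2 - 4) 0 = 0 := max_eq_right (by linarith)
    rw [htrlAn, htrlA, hmax, hmax']
    simp
  · -- hyperbolic
    have h4 : (0:ℝ) ≤ t^2 - 4 := by linarith
    set s : ℝ := arsinh (√(t^2-4)/2) with hs
    have hsnn : 0 ≤ s := Real.arsinh_nonneg_iff.mpr (by positivity)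
    have hcosh : Real.cosh s = |t|/2 := by
      rw [hs, Real.cosh_arsinh, div_pow, Real.sq_sqrt h4,
        show 1 + (t^2-4)/2^2 = (t/2)^2 by ring, Real.sqrt_sq_eq_abs, abs_div]
      norm_num
    have hε : ∃ ε : ℝ, (ε = 1 ∨ ε = -1) ∧ t = ε * (2 * Real.cosh s) := by
      rcases le_or_gt 0 t with htp | htn
      · exact ⟨1, Or.inl rfl, by rw [hcosh, abs_of_nonneg htp]; ring⟩
      · exact ⟨-1, Or.inr rfl, by rw [hcosh, abs_of_neg htn]; ring⟩
    obtain ⟨ε, hε1, hεt⟩ := hε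
    have hTn := seq_cosh t s ε hε1 hεt T hT0 hT1 hTrec n
    have hε2 : (ε^n)^2 = 1 := by
      rcases hε1 with rfl | rfl
      · simp
      · rw [← pow_mul, mul_comm, pow_mul]; simp
    have hmax : max ((T n)^2 - 4) 0 = (2 * Real.sinh ((n:ℝ)*s))^2 := by
      rw [hTn]
      have : (ε^n * (2 * Real.cosh ((n:ℝ)*s)))^2 - 4
          = (2 * Real.sinh ((n:ℝ)*s))^2 := by
        have hc := Real.cosh_sq ((n:ℝ)*s)
        nlinarith [hε2, hc]
      rw [this]
      exact max_eq_left (sq_nonneg _)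
    have hsq : √((2 * Real.sinh ((n:ℝ)*s))^2) = 2 * Real.sinh ((n:ℝ)*s) := by
      rw [Real.sqrt_sq_eq_abs, abs_of_nonneg]
      have : 0 ≤ Real.sinh ((n:ℝ)*s) := by
        rw [← Real.sinh_zero]
        exact Real.sinh_le_sinh.mpr (by positivity)
      linarith
    rw [htrlAn, hmax, hsq]
    have harg : 2 * Real.sinh ((n:ℝ)*s) / 2 = Real.sinh ((n:ℝ)*s) := by ring
    rw [harg, Real.arsinh_sinh]
    rw [htrlA, max_eq_left h4, ← hs]
    ring
end

section
/- Let X be a nonempty compact Hausdorff topological space, let H be a closed linear subspace of the Banach space C(X,ℝ) of continuous real-valued functions on X with the supremum norm, and let κ ∈ C(X,ℝ). Assume that every nonzero finite regular Borel measure μ on X with ∫ h dμ = 0 for all h ∈ H satisfies ∫ κ dμ < 0. Then there exists h ∈ H such that κ(x) − h(x) < 0 for every x ∈ X. -/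
set_option linter.unusedSectionVars false


open MeasureTheory TopologicalSpace Set
open scoped ENNReal NNReal

noncomputable section

namespace RMKAux

/-- Small real-analysis helper: if `a ≥ -(ε * b)` for all positive `ε` (with `b ≥ 0`),
then `a ≥ 0`. -/
theorem nonneg_of_forall_neg_eps {a b : ℝ} (hb : 0 ≤ b)
    (h : ∀ ε : ℝ, 0 < ε → -(ε * b) ≤ a) : 0 ≤ a := by
  by_contra ha
  push_neg at ha
  rcases eq_or_lt_of_le hb with hb0 | hb0
  · have := h 1 one_pos
    rw [← hb0] at this
    simp at this
    linarith
  · have hpos : 0 < -a / (2 * b) := div_pos (neg_pos.2 ha) (by linarith)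
    have hb' : b ≠ 0 := ne_of_gt hb0
    have heq : -(-a / (2 * b) * b) = a / 2 := by field_simp
    have h2 := h (-a / (2 * b)) hpos
    rw [heq] at h2
    linarith


/-- Telescoping identity: summing the "slabs" of height `δ` recovers `min t (n δ)`. -/
theorem sum_min_max (δ : ℝ) (hδ : 0 ≤ δ) (t : ℝ) (ht : 0 ≤ t) :
    ∀ n : ℕ, (∑ k ∈ Finset.range n, min (max (t - (k : ℝ) * δ) 0) δ) = min t ((n : ℝ) * δ)
  | 0 => by simp [min_eq_right ht]
  | (n + 1) => by
    rw [Finset.sum_range_succ, sum_min_max δ hδ t ht n]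
    push_cast
    rcases le_total t ((n : ℝ) * δ) with h | h
    · rw [min_eq_left h, max_eq_right (by linarith), min_eq_left hδ,
        min_eq_left (by nlinarith)]
      ring
    · rw [min_eq_right h, max_eq_left (by linarith)]
      rcases le_total (t - (n : ℝ) * δ) δ with h2 | h2
      · rw [min_eq_left h2, min_eq_left (by nlinarith)]
        ring
      · rw [min_eq_right h2, min_eq_right (by nlinarith)]
        ring

variable {X : Type*} [TopologicalSpace X] [CompactSpace X] [T2Space X] [Nonempty X]

variable (Λ : C(X, ℝ) →ₗ[ℝ] ℝ)

/-- Admissible test functions for a set `K`: nonnegative and `≥ 1` on `K`. -/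
def Adm (K : Set X) : Set C(X, ℝ) := {f | (∀ x, 0 ≤ f x) ∧ ∀ x ∈ K, 1 ≤ f x}

/-- The Riesz content function. -/
def rieszFn (K : Set X) : ℝ := sInf (Λ '' Adm K)

variable {Λ}

section Basic

variable (hΛ : ∀ f : C(X, ℝ), (∀ x, 0 ≤ f x) → 0 ≤ Λ f)
include hΛ

theorem lam_mono {f g : C(X, ℝ)} (h : ∀ x, f x ≤ g x) : Λ f ≤ Λ g := by
  have h0 : 0 ≤ Λ (g - f) := hΛ _ (fun x => by simp [sub_nonneg.2 (h x)])
  have h1 : Λ (g - f) = Λ g - Λ f := map_sub _ _ _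
  linarith [h1 ▸ h0]

omit hΛ in
theorem one_mem_Adm (K : Set X) : (1 : C(X, ℝ)) ∈ Adm K :=
  ⟨fun x => by simp, fun x _ => by simp⟩

omit hΛ in
theorem Adm_nonempty (K : Set X) : (Λ '' Adm K).Nonempty := ⟨Λ 1, 1, one_mem_Adm K, rfl⟩

theorem Adm_bddBelow (K : Set X) : BddBelow (Λ '' Adm K) := by
  refine ⟨0, ?_⟩
  rintro r ⟨f, hf, rfl⟩
  exact hΛ f hf.1

theorem rieszFn_nonneg (K : Set X) : 0 ≤ rieszFn Λ K :=
  le_csInf (Adm_nonempty K) (by rintro r ⟨f, hf, rfl⟩; exact hΛ f hf.1)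

theorem rieszFn_le {K : Set X} {f : C(X, ℝ)} (hf : f ∈ Adm K) : rieszFn Λ K ≤ Λ f :=
  csInf_le (Adm_bddBelow hΛ K) ⟨f, hf, rfl⟩

theorem rieszFn_mono {K₁ K₂ : Set X} (h : K₁ ⊆ K₂) : rieszFn Λ K₁ ≤ rieszFn Λ K₂ := by
  apply csInf_le_csInf (Adm_bddBelow hΛ K₁) (Adm_nonempty K₂)
  rintro r ⟨f, hf, rfl⟩
  exact ⟨f, ⟨hf.1, fun x hx => hf.2 x (h hx)⟩, rfl⟩

omit hΛ in
theorem exists_adm_lt (K : Set X) {ε : ℝ} (hε : 0 < ε) :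
    ∃ f ∈ Adm K, Λ f < rieszFn Λ K + ε := by
  obtain ⟨r, ⟨f, hf, rfl⟩, hr⟩ :=
    exists_lt_of_csInf_lt (Adm_nonempty (Λ := Λ) K) (lt_add_of_pos_right (rieszFn Λ K) hε)
  exact ⟨f, hf, hr⟩

theorem rieszFn_univ : rieszFn Λ (univ : Set X) = Λ 1 := by
  refine le_antisymm (rieszFn_le hΛ (one_mem_Adm univ)) ?_
  refine le_csInf (Adm_nonempty univ) ?_
  rintro r ⟨f, hf, rfl⟩
  exact lam_mono hΛ (fun x => by simpa using hf.2 x (mem_univ x))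

theorem rieszFn_union_le (K₁ K₂ : Set X) :
    rieszFn Λ (K₁ ∪ K₂) ≤ rieszFn Λ K₁ + rieszFn Λ K₂ := by
  refine le_of_forall_pos_le_add (fun ε hε => ?_)
  obtain ⟨f₁, hf₁, hlt₁⟩ := exists_adm_lt (Λ := Λ) K₁ (half_pos hε)
  obtain ⟨f₂, hf₂, hlt₂⟩ := exists_adm_lt (Λ := Λ) K₂ (half_pos hε)
  have hmem : f₁ + f₂ ∈ Adm (K₁ ∪ K₂) := by
    constructor
    · intro x; simpa using add_nonneg (hf₁.1 x) (hf₂.1 x)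
    · rintro x (hx | hx)
      · simpa using le_add_of_le_of_nonneg (hf₁.2 x hx) (hf₂.1 x)
      · simpa using le_add_of_nonneg_of_le (hf₁.1 x) (hf₂.2 x hx)
  calc rieszFn Λ (K₁ ∪ K₂) ≤ Λ (f₁ + f₂) := rieszFn_le hΛ hmem
    _ = Λ f₁ + Λ f₂ := map_add _ _ _
    _ ≤ rieszFn Λ K₁ + rieszFn Λ K₂ + ε := by linarith

theorem add_le_rieszFn_union {K₁ K₂ : Set X} (h₁ : IsCompact K₁) (h₂ : IsCompact K₂)
    (hd : Disjoint K₁ K₂) :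
    rieszFn Λ K₁ + rieszFn Λ K₂ ≤ rieszFn Λ (K₁ ∪ K₂) := by
  refine le_of_forall_pos_le_add (fun ε hε => ?_)
  obtain ⟨f, hf, hlt⟩ := exists_adm_lt (Λ := Λ) (K₁ ∪ K₂) hε
  obtain ⟨g, hg0, hg1, hg01⟩ := exists_continuous_zero_one_of_isCompact' h₁ h₂.isClosed hd
  have hfg : f * g ∈ Adm K₁ := by
    constructor
    · intro x; exact mul_nonneg (hf.1 x) (hg01 x).1
    · intro x hx
      have hgx : g x = 1 := hg1 hx
      have := hf.2 x (Or.inl hx)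
      simp only [ContinuousMap.mul_apply, hgx, mul_one]
      exact this
  have hfg' : f * (1 - g) ∈ Adm K₂ := by
    constructor
    · intro x
      simp only [ContinuousMap.mul_apply, ContinuousMap.sub_apply, ContinuousMap.one_apply]
      exact mul_nonneg (hf.1 x) (by linarith [(hg01 x).2])
    · intro x hx
      have hgx : g x = 0 := hg0 hx
      have := hf.2 x (Or.inr hx)
      simp only [ContinuousMap.mul_apply, ContinuousMap.sub_apply, ContinuousMap.one_apply, hgx]
      simpa using this
  have hsum : f * g + f * (1 - g) = f := by ring
  calc rieszFn Λ K₁ + rieszFn Λ K₂ ≤ Λ (f * g) + Λ (f * (1 - g)) :=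
        add_le_add (rieszFn_le hΛ hfg) (rieszFn_le hΛ hfg')
    _ = Λ f := by rw [← map_add, hsum]
    _ ≤ rieszFn Λ (K₁ ∪ K₂) + ε := hlt.le

/-- The Riesz content, as a `Content`. -/
def rieszContent : Content X where
  toFun K := (rieszFn Λ (K : Set X)).toNNReal
  mono' K₁ K₂ h := Real.toNNReal_mono (rieszFn_mono hΛ h)
  sup_disjoint' K₁ K₂ hd _ _ := by
    have h1 := add_le_rieszFn_union hΛ K₁.2 K₂.2 hd
    have h2 := rieszFn_union_le (Λ := Λ) hΛ (K₁ : Set X) K₂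
    have heq : rieszFn Λ ((K₁ : Set X) ∪ K₂) = rieszFn Λ K₁ + rieszFn Λ K₂ :=
      le_antisymm h2 h1
    have hco : ((K₁ ⊔ K₂ : Compacts X) : Set X) = (K₁ : Set X) ∪ K₂ := rfl
    rw [hco, heq, Real.toNNReal_add (rieszFn_nonneg hΛ _) (rieszFn_nonneg hΛ _)]
  sup_le' K₁ K₂ := by
    have h2 := rieszFn_union_le (Λ := Λ) hΛ (K₁ : Set X) K₂
    have hco : ((K₁ ⊔ K₂ : Compacts X) : Set X) = (K₁ : Set X) ∪ K₂ := rfl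
    rw [hco]
    exact le_trans (Real.toNNReal_mono h2) Real.toNNReal_add_le

theorem rieszContent_regular : (rieszContent hΛ).ContentRegular := by
  intro K
  refine le_antisymm (le_iInf₂ fun K' hK' => ?_) ?_
  · exact ENNReal.coe_le_coe.2 <| Real.toNNReal_mono <| rieszFn_mono hΛ
      (hK'.trans interior_subset)
  · refine ENNReal.le_of_forall_pos_le_add (fun ε hε _ => ?_)
    set L := rieszFn Λ (K : Set X) with hLdef
    have hL0 : 0 ≤ L := rieszFn_nonneg hΛ _
    have hεR : (0 : ℝ) < (ε : ℝ) := hε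
    obtain ⟨δ, hδ0, hδε⟩ : ∃ δ : ℝ, 0 < δ ∧ (1 + δ) * (L + δ) ≤ L + (ε : ℝ) := by
      refine ⟨min 1 ((ε : ℝ) / (L + 2)) / 2, by positivity, ?_⟩
      set δ := min 1 ((ε : ℝ) / (L + 2)) / 2 with hδdef
      have h1 : δ ≤ 1 / 2 := by
        have := min_le_left 1 ((ε : ℝ) / (L + 2)); rw [hδdef]; linarith
      have h2 : δ ≤ (ε : ℝ) / (L + 2) / 2 := by
        have := min_le_right 1 ((ε : ℝ) / (L + 2)); rw [hδdef]; linarith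
      have hδ0' : 0 < δ := by positivity
      have key : δ * (L + 2) ≤ (ε : ℝ) / 2 := by
        rw [div_div] at h2
        calc δ * (L + 2) ≤ (ε : ℝ) / ((L + 2) * 2) * (L + 2) := by
              apply mul_le_mul_of_nonneg_right h2; linarith
          _ = (ε : ℝ) / 2 := by field_simp
      nlinarith
    obtain ⟨f, hf, hflt⟩ := exists_adm_lt (Λ := Λ) (K : Set X) hδ0
    set θ : ℝ := (1 + δ)⁻¹ with hθdef
    have hθ0 : 0 < θ := by positivity
    have hθ1 : θ < 1 := by
      rw [hθdef, inv_lt_one_iff₀]; right; linarith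
    have hcl : IsClosed {x | θ ≤ f x} := isClosed_le continuous_const f.continuous
    set K' : Compacts X := ⟨{x | θ ≤ f x}, hcl.isCompact⟩ with hK'def
    have hsub : (K : Set X) ⊆ interior (K' : Set X) := by
      have hopen : IsOpen {x | θ < f x} := isOpen_lt continuous_const f.continuous
      have h1 : (K : Set X) ⊆ {x | θ < f x} := fun x hx => lt_of_lt_of_le hθ1 (hf.2 x hx)
      have h2 : {x | θ < f x} ⊆ (K' : Set X) := fun x hx => show θ ≤ f x from le_of_lt hx
      exact h1.trans (interior_maximal h2 hopen)
    have hadm : (1 + δ) • f ∈ Adm (K' : Set X) := by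
      constructor
      · intro x
        simp only [ContinuousMap.smul_apply, smul_eq_mul]
        exact mul_nonneg (by linarith) (hf.1 x)
      · intro x hx
        have hx' : θ ≤ f x := hx
        simp only [ContinuousMap.smul_apply, smul_eq_mul]
        calc (1 : ℝ) = (1 + δ) * θ := by
              rw [hθdef]; field_simp
          _ ≤ (1 + δ) * f x := by
              apply mul_le_mul_of_nonneg_left hx' (by linarith)
    have hbound : rieszFn Λ (K' : Set X) ≤ L + (ε : ℝ) := by
      calc rieszFn Λ (K' : Set X) ≤ Λ ((1 + δ) • f) := rieszFn_le hΛ hadm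
        _ = (1 + δ) * Λ f := by rw [Λ.map_smul]; rfl
        _ ≤ (1 + δ) * (L + δ) := by
            apply mul_le_mul_of_nonneg_left (le_of_lt hflt) (by linarith)
        _ ≤ L + (ε : ℝ) := hδε
    refine le_trans (iInf₂_le K' hsub) ?_
    have hnn : (rieszFn Λ (K' : Set X)).toNNReal ≤ (rieszFn Λ (K : Set X)).toNNReal + ε := by
      calc (rieszFn Λ (K' : Set X)).toNNReal ≤ (L + (ε : ℝ)).toNNReal :=
            Real.toNNReal_mono hbound
        _ = L.toNNReal + ((ε : ℝ)).toNNReal :=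
            Real.toNNReal_add hL0 (le_of_lt hεR)
        _ = (rieszFn Λ (K : Set X)).toNNReal + ε := by rw [Real.toNNReal_coe]
    calc ((rieszContent hΛ) K' : ℝ≥0∞)
        = (((rieszFn Λ (K' : Set X)).toNNReal : ℝ≥0) : ℝ≥0∞) := rfl
      _ ≤ (((rieszFn Λ (K : Set X)).toNNReal + ε : ℝ≥0) : ℝ≥0∞) := ENNReal.coe_le_coe.2 hnn
      _ = ((rieszContent hΛ) K : ℝ≥0∞) + (ε : ℝ≥0∞) := by
          rw [ENNReal.coe_add]; rfl

section Meas

variable [MeasurableSpace X] [BorelSpace X]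

/-- The Riesz measure associated to the positive functional. -/
def rieszMeasure : Measure X := (rieszContent hΛ).measure

theorem rieszMeasure_regular : (rieszMeasure hΛ).Regular := by
  show ((rieszContent hΛ).measure).Regular
  infer_instance

theorem rieszMeasure_compacts {K : Set X} (hK : IsCompact K) :
    rieszMeasure hΛ K = ENNReal.ofReal (rieszFn Λ K) := by
  have h := Content.measure_eq_content_of_regular (rieszContent hΛ)
    (rieszContent_regular hΛ) ⟨K, hK⟩
  rw [rieszMeasure]
  exact h

theorem rieszMeasure_univ : rieszMeasure hΛ (univ : Set X) = ENNReal.ofReal (Λ 1) := by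
  rw [rieszMeasure_compacts hΛ isCompact_univ, rieszFn_univ hΛ]

theorem rieszMeasure_isFinite : IsFiniteMeasure (rieszMeasure hΛ) :=
  ⟨by rw [rieszMeasure_univ hΛ]; exact ENNReal.ofReal_lt_top⟩

omit hΛ in
theorem cm_integrable {μ : Measure X} [IsFiniteMeasure μ] (f : C(X, ℝ)) :
    Integrable (fun x => f x) μ :=
  f.continuous.integrable_of_hasCompactSupport (HasCompactSupport.of_compactSpace _)

theorem integral_le_lam (f : C(X, ℝ)) :
    ∫ x, f x ∂(rieszMeasure hΛ) ≤ Λ f := by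
  set μ := rieszMeasure hΛ with hμdef
  haveI : IsFiniteMeasure μ := rieszMeasure_isFinite hΛ
  have hΛ1 : (0 : ℝ) ≤ Λ 1 := hΛ 1 (fun x => by simp)
  have hμuniv : (μ univ).toReal = Λ 1 := by
    rw [hμdef, rieszMeasure_univ hΛ, ENNReal.toReal_ofReal hΛ1]
  have key : ∀ g : C(X, ℝ), (∀ x, 0 ≤ g x) → ∫ x, g x ∂μ ≤ Λ g := by
    intro g hg
    have main : ∀ δ : ℝ, 0 < δ → ∫ x, g x ∂μ ≤ Λ g + δ * Λ 1 := by
      intro δ hδ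
      obtain ⟨m, hm⟩ := exists_nat_ge (‖g‖ / δ)
      have hgle : ∀ x, g x ≤ (m : ℝ) * δ := by
        intro x
        have h1 : g x ≤ ‖g‖ := by
          have := g.norm_coe_le_norm x
          rw [Real.norm_eq_abs] at this
          linarith [le_abs_self (g x)]
        rw [div_le_iff₀ hδ] at hm
        linarith
      set E : ℕ → C(X, ℝ) := fun k =>
        ((g - ContinuousMap.const X ((k : ℝ) * δ)) ⊔ 0) ⊓ ContinuousMap.const X δ with hEdef
      have hEapp : ∀ k x, E k x = min (max (g x - (k : ℝ) * δ) 0) δ := by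
        intro k x
        simp [hEdef, min_comm, max_comm]
      have hE0 : ∀ k x, 0 ≤ E k x := fun k x => by
        rw [hEapp]; exact le_min (le_max_right _ _) hδ.le
      have hEδ : ∀ k x, E k x ≤ δ := fun k x => by
        rw [hEapp]; exact min_le_right _ _
      set C : ℕ → Set X := fun k => {x | (k : ℝ) * δ ≤ g x} with hCdef
      have hCcl : ∀ k, IsClosed (C k) := fun k => isClosed_le continuous_const g.continuous
      have hCmeas : ∀ k, MeasurableSet (C k) := fun k => (hCcl k).measurableSet
      have hterm : ∀ k, ∫ x, E k x ∂μ ≤ δ * (μ (C k)).toReal := by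
        intro k
        have hle : ∀ x, E k x ≤ (C k).indicator (fun _ => δ) x := by
          intro x
          by_cases hx : x ∈ C k
          · rw [Set.indicator_of_mem hx]; exact hEδ k x
          · rw [Set.indicator_of_notMem hx, hEapp]
            have hxlt : g x - (k : ℝ) * δ ≤ 0 := by
              have : ¬ ((k : ℝ) * δ ≤ g x) := hx
              linarith [lt_of_not_ge this]
            rw [max_eq_right hxlt]
            exact min_le_left _ _
        have hind : Integrable ((C k).indicator (fun _ => δ)) μ := by
          rw [integrable_indicator_iff (hCmeas k)]
          exact integrableOn_const (measure_lt_top μ (C k)).ne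
        calc ∫ x, E k x ∂μ ≤ ∫ x, (C k).indicator (fun _ => δ) x ∂μ :=
              integral_mono (cm_integrable _) hind hle
          _ = (μ (C k)).toReal • δ := integral_indicator_const δ (hCmeas k)
          _ = δ * (μ (C k)).toReal := by rw [smul_eq_mul, mul_comm]
      have hCμ : ∀ k, (μ (C k)).toReal = rieszFn Λ (C k) := by
        intro k
        rw [hμdef, rieszMeasure_compacts hΛ (hCcl k).isCompact,
          ENNReal.toReal_ofReal (rieszFn_nonneg hΛ _)]
      have hC0 : C 0 = univ := by
        ext x; simp [hCdef, hg x]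
      have hCk : ∀ k : ℕ, δ * rieszFn Λ (C (k + 1)) ≤ Λ (E k) := by
        intro k
        have hadm : δ⁻¹ • E k ∈ Adm (C (k + 1)) := by
          constructor
          · intro x
            simp only [ContinuousMap.smul_apply, smul_eq_mul]
            exact mul_nonneg (inv_nonneg.2 hδ.le) (hE0 k x)
          · intro x hx
            have hx' : ((k : ℝ) + 1) * δ ≤ g x := by
              have : ((k + 1 : ℕ) : ℝ) * δ ≤ g x := hx
              push_cast at this
              linarith
            have hEkx : E k x = δ := by
              rw [hEapp, max_eq_left (by nlinarith), min_eq_right (by nlinarith)]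
            simp only [ContinuousMap.smul_apply, smul_eq_mul, hEkx]
            rw [inv_mul_cancel₀ hδ.ne']
        have h1 : rieszFn Λ (C (k + 1)) ≤ δ⁻¹ * Λ (E k) := by
          have h := rieszFn_le hΛ hadm
          rwa [Λ.map_smul, smul_eq_mul] at h
        calc δ * rieszFn Λ (C (k + 1)) ≤ δ * (δ⁻¹ * Λ (E k)) :=
              mul_le_mul_of_nonneg_left h1 hδ.le
          _ = Λ (E k) := by
              rw [← mul_assoc, mul_inv_cancel₀ hδ.ne', one_mul]
      have hsumE : ∀ (n : ℕ) (x : X), (∑ k ∈ Finset.range n, E k) x = min (g x) ((n : ℝ) * δ) := by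
        intro n x
        have hc : (∑ k ∈ Finset.range n, E k) x = ∑ k ∈ Finset.range n, E k x := by
          induction n with
          | zero => simp
          | succ n ih => rw [Finset.sum_range_succ, Finset.sum_range_succ,
              ContinuousMap.add_apply, ih]
        rw [hc]
        have : ∀ k ∈ Finset.range n, E k x = min (max (g x - (k : ℝ) * δ) 0) δ :=
          fun k _ => hEapp k x
        rw [Finset.sum_congr rfl this]
        exact sum_min_max δ hδ.le (g x) (hg x) n
      have hgsum : ∀ x, g x = (∑ k ∈ Finset.range (m + 1), E k) x := by
        intro x
        rw [hsumE (m + 1) x, min_eq_left]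
        push_cast
        have := hgle x
        nlinarith
      have hint : ∫ x, g x ∂μ = ∑ k ∈ Finset.range (m + 1), ∫ x, E k x ∂μ := by
        have h1 : ∫ x, g x ∂μ = ∫ x, (∑ k ∈ Finset.range (m + 1), E k) x ∂μ := by
          apply integral_congr_ae
          filter_upwards with x using hgsum x
        have h2 : (fun x => (∑ k ∈ Finset.range (m + 1), E k) x)
            = fun x => ∑ k ∈ Finset.range (m + 1), E k x := by
          funext x
          induction' (m + 1) with n ih
          · simp
          · rw [Finset.sum_range_succ, Finset.sum_range_succ, ContinuousMap.add_apply, ih]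
        rw [h1, h2, integral_finset_sum _ (fun k _ => cm_integrable _)]
      calc ∫ x, g x ∂μ = ∑ k ∈ Finset.range (m + 1), ∫ x, E k x ∂μ := hint
        _ ≤ ∑ k ∈ Finset.range (m + 1), δ * (μ (C k)).toReal :=
            Finset.sum_le_sum (fun k _ => hterm k)
        _ = (∑ k ∈ Finset.range m, δ * (μ (C (k + 1))).toReal) + δ * (μ (C 0)).toReal :=
            Finset.sum_range_succ' _ m
        _ ≤ (∑ k ∈ Finset.range m, Λ (E k)) + δ * Λ 1 := by
            apply add_le_add
            · apply Finset.sum_le_sum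
              intro k _
              rw [hCμ (k + 1)]
              exact hCk k
            · rw [hC0, hμuniv]
        _ = Λ (∑ k ∈ Finset.range m, E k) + δ * Λ 1 := by rw [map_sum]
        _ ≤ Λ g + δ * Λ 1 := by
            refine add_le_add ?_ le_rfl
            apply lam_mono hΛ
            intro x
            rw [hsumE m x]
            exact min_le_left _ _
    refine le_of_forall_pos_le_add (fun ε hε => ?_)
    have hδ' : (0 : ℝ) < ε / (Λ 1 + 1) := by positivity
    have h := main _ hδ'
    have hle : ε / (Λ 1 + 1) * Λ 1 ≤ ε := by
      rw [div_mul_eq_mul_div, div_le_iff₀ (by linarith)]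
      nlinarith
    linarith
  -- general case by adding a constant
  have hnn : ∀ x, 0 ≤ (f + ContinuousMap.const X ‖f‖) x := by
    intro x
    have h1 : |f x| ≤ ‖f‖ := by
      have := f.norm_coe_le_norm x
      rwa [Real.norm_eq_abs] at this
    simp only [ContinuousMap.add_apply, ContinuousMap.const_apply]
    linarith [neg_abs_le (f x)]
  have h2 := key _ hnn
  have hadd : ∫ x, (f + ContinuousMap.const X ‖f‖) x ∂μ
      = (∫ x, f x ∂μ) + ‖f‖ * (μ univ).toReal := by
    simp only [ContinuousMap.add_apply, ContinuousMap.const_apply]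
    rw [integral_add (cm_integrable f) (integrable_const _), integral_const,
      smul_eq_mul, mul_comm, measureReal_def]
  have hΛadd : Λ (f + ContinuousMap.const X ‖f‖) = Λ f + ‖f‖ * Λ 1 := by
    have hconst : ContinuousMap.const X ‖f‖ = ‖f‖ • (1 : C(X, ℝ)) := by
      ext x; simp
    rw [map_add, hconst, Λ.map_smul, smul_eq_mul]
  rw [hadd, hΛadd, hμuniv] at h2
  linarith

end Meas

end Basic

end RMKAux

end

open RMKAux

/-- Let `X` be a nonempty compact Hausdorff space, `H` a closed linear subspace of the Banach
space `C(X,ℝ)` (with the supremum norm), and `κ ∈ C(X,ℝ)`. If every nonzero finite regular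
Borel measure `μ` on `X` with `∫ h dμ = 0` for all `h ∈ H` satisfies `∫ κ dμ < 0`, then there
exists `h ∈ H` with `κ(x) - h(x) < 0` for every `x ∈ X`. -/
theorem exists_sub_neg_of_forall_measure
    {X : Type*} [TopologicalSpace X] [CompactSpace X] [T2Space X] [Nonempty X]
    [MeasurableSpace X] [BorelSpace X]
    (H : Submodule ℝ C(X, ℝ)) (hH : IsClosed (H : Set C(X, ℝ)))
    (κ : C(X, ℝ))
    (hyp : ∀ μ : Measure X, IsFiniteMeasure μ → μ.Regular → μ ≠ 0 →
      (∀ h ∈ H, ∫ x, h x ∂μ = 0) → ∫ x, κ x ∂μ < 0) :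
    ∃ h ∈ H, ∀ x, κ x - h x < 0 := by
  by_contra hcon
  push_neg at hcon
  -- the open convex cone of everywhere-negative functions
  set N : Set C(X, ℝ) := {f | ∀ x, f x < 0} with hNdef
  have hNopen : IsOpen N := by
    rw [Metric.isOpen_iff]
    intro f hf
    obtain ⟨x₀, -, hx₀⟩ := isCompact_univ.exists_isMaxOn univ_nonempty f.continuous.continuousOn
    refine ⟨-f x₀, by simpa using hf x₀, fun g hg => ?_⟩
    intro x
    have h1 : |g x - f x| ≤ dist g f := by
      have := (g - f).norm_coe_le_norm x
      rw [Real.norm_eq_abs] at this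
      simpa [dist_eq_norm] using this
    have h2 : dist g f < -f x₀ := hg
    have h3 : f x ≤ f x₀ := hx₀ (mem_univ x)
    have := abs_le.1 h1
    linarith [this.2]
  have hNconv : Convex ℝ N := by
    intro f hf g hg a b ha hb hab
    intro x
    simp only [ContinuousMap.add_apply, ContinuousMap.smul_apply, smul_eq_mul]
    rcases eq_or_lt_of_le ha with ha0 | ha0
    · rw [← ha0] at hab ⊢
      simp only [zero_mul, zero_add] at hab ⊢
      rw [hab]
      simpa using hg x
    · rcases eq_or_lt_of_le hb with hb0 | hb0
      · rw [← hb0] at hab ⊢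
        simp only [zero_mul, add_zero] at hab ⊢
        rw [hab]
        simpa using hf x
      · nlinarith [hf x, hg x]
  -- the affine subspace κ + H
  set T : Set C(X, ℝ) := (fun h => κ + h) '' (H : Set C(X, ℝ)) with hTdef
  have hTconv : Convex ℝ T := H.convex.translate κ
  have hdisj : Disjoint N T := by
    rw [Set.disjoint_left]
    rintro g hgN ⟨h, hh, rfl⟩
    obtain ⟨x, hx⟩ := hcon (-h) (neg_mem hh)
    have := hgN x
    simp only [ContinuousMap.add_apply] at this
    simp only [ContinuousMap.neg_apply, sub_neg_eq_add] at hx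
    linarith
  obtain ⟨Λ₀, u, hNu, hTu⟩ := geometric_hahn_banach_open hNconv hNopen hTconv hdisj
  -- Λ₀ is nonpositive on N
  have hN1 : ∀ g ∈ N, Λ₀ g ≤ 0 := by
    intro g hg
    by_contra hpos
    push_neg at hpos
    have hc : ∀ c : ℝ, 0 < c → c * Λ₀ g < u := by
      intro c hc
      have hmem : c • g ∈ N := fun x => by
        simp only [ContinuousMap.smul_apply, smul_eq_mul]
        exact mul_neg_of_pos_of_neg hc (hg x)
      have := hNu _ hmem
      rwa [Λ₀.map_smul, smul_eq_mul] at this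
    have h1 := hc ((|u| + 1) / Λ₀ g) (by positivity)
    rw [div_mul_cancel₀ _ (ne_of_gt hpos)] at h1
    have := le_abs_self u
    linarith
  -- Λ₀ 1 ≥ 0
  have hone : (0:ℝ) ≤ Λ₀ 1 := by
    have h := hN1 (-1) (fun x => by simp)
    rw [map_neg] at h
    linarith
  -- u ≥ 0
  have hu0 : 0 ≤ u := by
    have heps : ∀ ε : ℝ, 0 < ε → -(ε * Λ₀ 1) < u := by
      intro ε hε
      have hmem : -(ε • (1 : C(X, ℝ))) ∈ N := fun x => by
        simp only [ContinuousMap.neg_apply, ContinuousMap.smul_apply, smul_eq_mul,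
          ContinuousMap.one_apply, mul_one]
        linarith
      have := hNu _ hmem
      rwa [map_neg, Λ₀.map_smul, smul_eq_mul] at this
    exact RMKAux.nonneg_of_forall_neg_eps hone (fun ε hε => (heps ε hε).le)
  -- Λ₀ vanishes on H
  have hH0 : ∀ h ∈ H, Λ₀ h = 0 := by
    intro h hh
    by_contra hne
    have hall : ∀ t : ℝ, u ≤ Λ₀ κ + t * Λ₀ h := by
      intro t
      have hmem : κ + t • h ∈ T := ⟨t • h, H.smul_mem t hh, rfl⟩
      have := hTu _ hmem
      rwa [map_add, Λ₀.map_smul, smul_eq_mul] at this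
    have := hall ((u - 1 - Λ₀ κ) / Λ₀ h)
    rw [div_mul_cancel₀ _ hne] at this
    linarith
  -- Λ₀ κ ≥ u ≥ 0
  have hκ0 : u ≤ Λ₀ κ := by
    have := hTu κ ⟨0, H.zero_mem, by simp⟩
    simpa using this
  -- Λ₀ is a positive functional
  have hpos : ∀ f : C(X, ℝ), (∀ x, 0 ≤ f x) → 0 ≤ Λ₀.toLinearMap f := by
    intro f hf
    have heps : ∀ ε : ℝ, 0 < ε → -(ε * Λ₀ 1) ≤ Λ₀ f := by
      intro ε hε
      have hmem : -f - ε • (1 : C(X, ℝ)) ∈ N := fun x => by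
        simp only [ContinuousMap.sub_apply, ContinuousMap.neg_apply, ContinuousMap.smul_apply,
          smul_eq_mul, ContinuousMap.one_apply, mul_one]
        linarith [hf x]
      have := hN1 _ hmem
      rw [map_sub, map_neg, Λ₀.map_smul, smul_eq_mul] at this
      linarith
    exact RMKAux.nonneg_of_forall_neg_eps hone heps
  -- Λ₀ 1 > 0
  have hone' : (0:ℝ) < Λ₀ 1 := by
    rcases eq_or_lt_of_le hone with h0 | h0
    · exfalso
      have hz : ∀ f : C(X, ℝ), Λ₀ f = 0 := by
        intro f
        have hb : ∀ g : C(X, ℝ), Λ₀ g ≤ ‖g‖ * Λ₀ 1 := by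
          intro g
          have hmono := RMKAux.lam_mono (Λ := Λ₀.toLinearMap) hpos
            (f := g) (g := ‖g‖ • (1 : C(X, ℝ))) (fun x => by
              simp only [ContinuousMap.smul_apply, smul_eq_mul, ContinuousMap.one_apply, mul_one]
              have := g.norm_coe_le_norm x
              rw [Real.norm_eq_abs] at this
              linarith [le_abs_self (g x)])
          have heq : Λ₀.toLinearMap (‖g‖ • (1 : C(X, ℝ))) = ‖g‖ * Λ₀ 1 := by
            show Λ₀ (‖g‖ • (1 : C(X, ℝ))) = ‖g‖ * Λ₀ 1
            rw [Λ₀.map_smul, smul_eq_mul]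
          rw [heq] at hmono
          exact hmono
        have h1 := hb f
        have h2 := hb (-f)
        rw [map_neg, norm_neg] at h2
        rw [← h0] at h1 h2
        simp only [mul_zero] at h1 h2
        linarith
      have hu1 : 0 < u := by
        have := hNu (-1) (fun x => by simp)
        rw [hz (-1)] at this
        exact this
      have := hκ0
      rw [hz κ] at this
      linarith
    · exact h0
  -- Build the Riesz measure from Λ₀ and contradict `hyp`
  set μ := RMKAux.rieszMeasure (Λ := Λ₀.toLinearMap) hpos with hμdef
  haveI hfin : IsFiniteMeasure μ := RMKAux.rieszMeasure_isFinite hpos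
  have hreg : μ.Regular := RMKAux.rieszMeasure_regular hpos
  have hne : μ ≠ 0 := by
    intro h0
    have := RMKAux.rieszMeasure_univ (Λ := Λ₀.toLinearMap) hpos
    rw [← hμdef, h0] at this
    simp only [Measure.coe_zero, Pi.zero_apply] at this
    rw [eq_comm, ENNReal.ofReal_eq_zero] at this
    exact absurd this (not_le.2 hone')
  have hannih : ∀ h ∈ H, ∫ x, h x ∂μ = 0 := by
    intro h hh
    have h1 := RMKAux.integral_le_lam (Λ := Λ₀.toLinearMap) hpos h
    have h2 := RMKAux.integral_le_lam (Λ := Λ₀.toLinearMap) hpos (-h)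
    have hΛh : Λ₀.toLinearMap h = 0 := hH0 h hh
    have hint : ∫ x, (-h : C(X, ℝ)) x ∂μ = -∫ x, h x ∂μ := by
      simp only [ContinuousMap.neg_apply]
      exact integral_neg _
    rw [hint, map_neg, hΛh] at h2
    rw [hΛh] at h1
    simp only [neg_zero] at h2
    linarith
  have hκint : 0 ≤ ∫ x, κ x ∂μ := by
    have h2 := RMKAux.integral_le_lam (Λ := Λ₀.toLinearMap) hpos (-κ)
    have hint : ∫ x, (-κ : C(X, ℝ)) x ∂μ = -∫ x, κ x ∂μ := by
      simp only [ContinuousMap.neg_apply]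
      exact integral_neg _
    rw [hint, map_neg] at h2
    have : Λ₀.toLinearMap κ = Λ₀ κ := rfl
    rw [this] at h2
    linarith
  exact absurd (hyp μ hfin hreg hne hannih) (not_lt.2 hκint)
end

section
/- Let X be a nonempty compact metric space, T : X → X a continuous map, g : X → ℝ a continuous function, and x ∈ X. If limsup_{n→∞} (1/n) Σ_{i=0}^{n-1} g(Tⁱx) ≥ 0, then there exists a T-invariant Borel probability measure μ on X with ∫ g dμ ≥ 0. -/
open MeasureTheory Filter

open Set BoundedContinuousFunction Topology
open scoped NNReal ENNReal

set_option linter.unusedSectionVars false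

namespace KBaux

lemma lipschitzWith_nnreal_coe : LipschitzWith 1 ((↑) : ℝ≥0 → ℝ) :=
  LipschitzWith.of_dist_le_mul fun a b => by
    simp [NNReal.dist_eq, Real.dist_eq]

/-- Coercion of a nonnegative bounded continuous function to a real one. -/
noncomputable def nnToReal {Y : Type*} [TopologicalSpace Y] (f : Y →ᵇ ℝ≥0) : Y →ᵇ ℝ :=
  BoundedContinuousFunction.comp _ lipschitzWith_nnreal_coe f

@[simp] lemma nnToReal_apply {Y : Type*} [TopologicalSpace Y] (f : Y →ᵇ ℝ≥0) (y : Y) :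
    nnToReal f y = (f y : ℝ) := rfl

lemma nnToReal_nonneg {Y : Type*} [TopologicalSpace Y] (f : Y →ᵇ ℝ≥0) (y : Y) :
    0 ≤ nnToReal f y := (f y).coe_nonneg

variable {X : Type*} [MetricSpace X] [CompactSpace X] [Nonempty X]
  [MeasurableSpace X] [BorelSpace X]

variable (Λ : (X →ᵇ ℝ) →ₗ[ℝ] ℝ)

lemma lam_mono (hpos : ∀ f : X →ᵇ ℝ, (∀ z, 0 ≤ f z) → 0 ≤ Λ f) {f g : X →ᵇ ℝ} (h : ∀ z, f z ≤ g z) : Λ f ≤ Λ g := by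
  have h1 : 0 ≤ Λ (g - f) := hpos _ (fun z => by
    simp only [BoundedContinuousFunction.coe_sub, Pi.sub_apply, sub_nonneg]; exact h z)
  have h2 : Λ (g - f) = Λ g - Λ f := map_sub Λ g f
  linarith

/-- The induced `ℝ≥0`-linear functional on nonnegative bounded continuous functions. -/
noncomputable def nnFunctional (hpos : ∀ f : X →ᵇ ℝ, (∀ z, 0 ≤ f z) → 0 ≤ Λ f) :
    (X →ᵇ ℝ≥0) →ₗ[ℝ≥0] ℝ≥0 where
  toFun f := (Λ (nnToReal f)).toNNReal
  map_add' f g := by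
    show (Λ (nnToReal (f + g))).toNNReal = (Λ (nnToReal f)).toNNReal + (Λ (nnToReal g)).toNNReal
    have h1 : nnToReal (f + g) = nnToReal f + nnToReal g := by
      ext z; simp
    rw [h1, map_add, Real.toNNReal_add (hpos _ (nnToReal_nonneg f)) (hpos _ (nnToReal_nonneg g))]
  map_smul' c f := by
    show (Λ (nnToReal (c • f))).toNNReal = c * (Λ (nnToReal f)).toNNReal
    have h1 : nnToReal (c • f) = (c : ℝ) • nnToReal f := by
      ext z
      simp [NNReal.smul_def]
    rw [h1, _root_.map_smul, smul_eq_mul, Real.toNNReal_mul c.coe_nonneg, Real.toNNReal_coe]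

lemma coe_nnFunctional (hpos : ∀ f : X →ᵇ ℝ, (∀ z, 0 ≤ f z) → 0 ≤ Λ f) (f : X →ᵇ ℝ≥0) :
    ((nnFunctional Λ hpos f : ℝ≥0) : ℝ) = Λ (nnToReal f) :=
  Real.coe_toNNReal _ (hpos _ (nnToReal_nonneg f))

noncomputable def nnFunctionalC (hpos : ∀ f : X →ᵇ ℝ, (∀ z, 0 ≤ f z) → 0 ≤ Λ f) :
    CompactlySupportedContinuousMap X ℝ≥0 →ₗ[ℝ≥0] ℝ≥0 where
  toFun f := nnFunctional Λ hpos f.toBoundedContinuousFunction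
  map_add' f g := by
    show _ = nnFunctional Λ hpos _ + nnFunctional Λ hpos _
    rw [← map_add]; rfl
  map_smul' c f := by
    show _ = c • nnFunctional Λ hpos _
    rw [← _root_.map_smul]; rfl

lemma rca_le (hpos : ∀ f : X →ᵇ ℝ, (∀ z, 0 ≤ f z) → 0 ≤ Λ f) {K : TopologicalSpace.Compacts X}
    (f : X →ᵇ ℝ≥0) (h : ∀ x ∈ K, (1 : ℝ≥0) ≤ f x) :
    rieszContentAux (nnFunctionalC Λ hpos) K ≤ nnFunctional Λ hpos f :=
  le_of_le_of_eq (rieszContentAux_le (nnFunctionalC Λ hpos)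
    (f := CompactlySupportedContinuousMap.continuousMapEquiv f.toContinuousMap) h) rfl

/-- The Riesz content associated to the functional. -/
noncomputable def rContent (hpos : ∀ f : X →ᵇ ℝ, (∀ z, 0 ≤ f z) → 0 ≤ Λ f) : Content X where
  toFun := rieszContentAux (nnFunctionalC Λ hpos)
  mono' _ _ h := rieszContentAux_mono _ h
  sup_le' := rieszContentAux_sup_le _
  sup_disjoint' K₁ K₂ hdisj _ _ := by
    refine le_antisymm (rieszContentAux_sup_le _ K₁ K₂) ?_
    refine le_csInf (rieszContentAux_image_nonempty _ _) ?_
    rintro b ⟨f, hf, rfl⟩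
    obtain ⟨φ, hφ0, hφ1, hφmem⟩ :=
      exists_continuous_zero_one_of_isClosed K₂.isCompact.isClosed K₁.isCompact.isClosed
        hdisj.symm
    set φb : X →ᵇ ℝ := mkOfCompact φ with hφb
    set f₁ : X →ᵇ ℝ≥0 := f * φb.nnrealPart with hf₁
    set f₂ : X →ᵇ ℝ≥0 := f * ((1 : X →ᵇ ℝ) - φb).nnrealPart with hf₂
    have hsum : f₁ + f₂ = f := by
      ext z
      have h01 : (0:ℝ) ≤ φ z ∧ φ z ≤ 1 := ⟨(hφmem z).1, (hφmem z).2⟩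
      simp only [hf₁, hf₂, BoundedContinuousFunction.coe_add, Pi.add_apply,
        BoundedContinuousFunction.coe_mul, Pi.mul_apply]
      rw [← mul_add]
      have : φb.nnrealPart z + ((1 : X →ᵇ ℝ) - φb).nnrealPart z = 1 := by
        have hz1 : φb z = φ z := rfl
        ext
        push_cast
        rw [nnrealPart_coeFn_eq, nnrealPart_coeFn_eq]
        simp only [Function.comp_apply, BoundedContinuousFunction.coe_sub,
          BoundedContinuousFunction.coe_one, Pi.sub_apply, Pi.one_apply]
        rw [Real.coe_toNNReal _ (by rw [hz1]; linarith [h01.1]),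
          Real.coe_toNNReal _ (by rw [hz1]; linarith [h01.2])]
        rw [hz1]; ring
      rw [this, mul_one]
    have h₁ : rieszContentAux (nnFunctionalC Λ hpos) K₁ ≤ nnFunctional Λ hpos f₁ := by
      apply rca_le
      intro z hz
      have : φ z = 1 := hφ1 hz
      have hfz : (1:ℝ≥0) ≤ f z := hf z (Or.inl hz)
      simp only [hf₁, BoundedContinuousFunction.coe_mul, Pi.mul_apply]
      have : φb.nnrealPart z = 1 := by
        ext; rw [nnrealPart_coeFn_eq]
        simp only [Function.comp_apply]
        rw [show φb z = φ z from rfl, this]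
        simp
      rw [this, mul_one]
      exact hfz
    have h₂ : rieszContentAux (nnFunctionalC Λ hpos) K₂ ≤ nnFunctional Λ hpos f₂ := by
      apply rca_le
      intro z hz
      have hz0 : φ z = 0 := hφ0 hz
      have hfz : (1:ℝ≥0) ≤ f z := hf z (Or.inr hz)
      simp only [hf₂, BoundedContinuousFunction.coe_mul, Pi.mul_apply]
      have : ((1 : X →ᵇ ℝ) - φb).nnrealPart z = 1 := by
        ext; rw [nnrealPart_coeFn_eq]
        simp only [Function.comp_apply, BoundedContinuousFunction.coe_sub,
          BoundedContinuousFunction.coe_one, Pi.sub_apply, Pi.one_apply]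
        rw [show φb z = φ z from rfl, hz0]
        simp
      rw [this, mul_one]
      exact hfz
    calc rieszContentAux (nnFunctionalC Λ hpos) K₁ + rieszContentAux (nnFunctionalC Λ hpos) K₂
        ≤ nnFunctional Λ hpos f₁ + nnFunctional Λ hpos f₂ := add_le_add h₁ h₂
      _ = nnFunctional Λ hpos (f₁ + f₂) := (map_add _ _ _).symm
      _ = nnFunctional Λ hpos f := by rw [hsum]

/-- The Riesz measure. -/
noncomputable def rMeasure (hpos : ∀ f : X →ᵇ ℝ, (∀ z, 0 ≤ f z) → 0 ≤ Λ f) : Measure X :=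
  (rContent Λ hpos).measure


lemma rieszContentAux_univ (hpos : ∀ f : X →ᵇ ℝ, (∀ z, 0 ≤ f z) → 0 ≤ Λ f) (hone : Λ 1 = 1) :
    rieszContentAux (nnFunctionalC Λ hpos) ⟨univ, isCompact_univ⟩ = 1 := by
  apply le_antisymm
  · have h1 : nnFunctional Λ hpos 1 = 1 := by
      show (Λ (nnToReal 1)).toNNReal = 1
      have h2 : nnToReal (1 : X →ᵇ ℝ≥0) = 1 := by ext z; simp
      rw [h2, hone]; simp
    calc rieszContentAux (nnFunctionalC Λ hpos) ⟨univ, isCompact_univ⟩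
        ≤ nnFunctional Λ hpos 1 := rca_le Λ hpos 1 (fun z _ => by simp)
      _ = 1 := h1
  · refine le_csInf (rieszContentAux_image_nonempty _ _) ?_
    rintro b ⟨f, hf, rfl⟩
    have hΛ : (1:ℝ) ≤ Λ (nnToReal f) := by
      calc (1:ℝ) = Λ 1 := hone.symm
        _ ≤ Λ (nnToReal f) := lam_mono Λ hpos (fun z => by
            have : (1:ℝ≥0) ≤ f z := hf z trivial
            simp only [BoundedContinuousFunction.coe_one, Pi.one_apply, nnToReal_apply]
            exact_mod_cast this)
    show (1:ℝ≥0) ≤ (Λ (nnToReal f)).toNNReal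
    rw [← Real.toNNReal_one]
    exact Real.toNNReal_mono hΛ

lemma rMeasure_univ (hpos : ∀ f : X →ᵇ ℝ, (∀ z, 0 ≤ f z) → 0 ≤ Λ f) (hone : Λ 1 = 1) :
    rMeasure Λ hpos univ = 1 := by
  rw [rMeasure, Content.measure_apply _ MeasurableSet.univ]
  have h1 : (rContent Λ hpos).outerMeasure univ
      = (rContent Λ hpos).innerContent ⟨univ, isOpen_univ⟩ :=
    Content.outerMeasure_opens _ ⟨univ, isOpen_univ⟩
  rw [h1, (rContent Λ hpos).innerContent_of_isCompact isCompact_univ isOpen_univ]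
  have : rContent Λ hpos ⟨univ, isCompact_univ⟩
      = ((rieszContentAux (nnFunctionalC Λ hpos) ⟨univ, isCompact_univ⟩ : ℝ≥0) : ℝ≥0∞) := rfl
  rw [this, rieszContentAux_univ Λ hpos hone]
  simp

lemma riesz_le (hpos : ∀ f : X →ᵇ ℝ, (∀ z, 0 ≤ f z) → 0 ≤ Λ f) (hone : Λ 1 = 1)
    (f : X →ᵇ ℝ) : Λ f ≤ ∫ z, f z ∂(rMeasure Λ hpos) := by
  set μ := rMeasure Λ hpos with hμdef
  haveI : IsProbabilityMeasure μ := ⟨rMeasure_univ Λ hpos hone⟩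
  have key : ∀ ε : ℝ, 0 < ε → ε ≤ 1 → Λ f ≤ ∫ z, f z ∂μ + ε * (4 + 2 * ‖f‖) := by
    intro ε hε hε1
    set b : ℝ := ‖f‖ with hb
    set a : ℝ := -‖f‖ - ε with ha
    have hab : 0 < b - a := by
      have := norm_nonneg f
      simp only [hb, ha]
      linarith
    set n : ℕ := ⌈(b - a) / ε⌉₊ with hn
    have hn0 : 0 < n := Nat.ceil_pos.2 (div_pos hab hε)
    have hn0' : (0:ℝ) < n := by exact_mod_cast hn0
    set δ : ℝ := (b - a) / n with hδdef
    have hδ0 : 0 < δ := div_pos hab hn0'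
    have hδε : δ ≤ ε := by
      rw [div_le_iff₀ hn0']
      calc b - a = ((b - a) / ε) * ε := by field_simp
        _ ≤ n * ε := mul_le_mul_of_nonneg_right (Nat.le_ceil _) hε.le
        _ = ε * n := mul_comm _ _
    set y : ℕ → ℝ := fun i => a + i * δ with hy
    have hy_mono : StrictMono y := fun i j hij => by
      simp only [hy]
      have : (i:ℝ) < j := by exact_mod_cast hij
      nlinarith
    have hy0 : y 0 = a := by simp [hy]
    have hyn : y n = b := by
      simp only [hy, hδdef]
      field_simp
      ring
    have hfx_mem : ∀ z : X, f z ∈ Ioc a b := by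
      intro z
      have h1 : |f z| ≤ ‖f‖ := f.norm_coe_le_norm z
      rw [abs_le] at h1
      exact ⟨by simp only [ha]; linarith, by simp only [hb]; linarith⟩
    set E : Fin n → Set X := fun i => f ⁻¹' (Ioc (y (i:ℕ)) (y ((i:ℕ)+1))) with hE
    have hEmeas : ∀ i, MeasurableSet (E i) :=
      fun i => f.continuous.measurable measurableSet_Ioc
    have hEdisj : Pairwise (Function.onFun Disjoint E) := by
      intro i j hij
      refine Disjoint.preimage f (Set.Ioc_disjoint_Ioc.2 ?_)
      rcases lt_or_gt_of_ne (fun h : (i:ℕ) = (j:ℕ) => hij (Fin.ext h)) with h | h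
      · calc min (y ((i:ℕ)+1)) (y (j+1)) ≤ y ((i:ℕ)+1) := min_le_left _ _
          _ ≤ y j := hy_mono.monotone h
          _ ≤ max (y i) (y j) := le_max_right _ _
      · calc min (y ((i:ℕ)+1)) (y (j+1)) ≤ y (j+1) := min_le_right _ _
          _ ≤ y i := hy_mono.monotone h
          _ ≤ max (y i) (y j) := le_max_left _ _
    have hEunion : (⋃ i, E i) = univ := by
      ext z
      simp only [mem_iUnion, mem_univ, iff_true]
      obtain ⟨haz, hzb⟩ := hfx_mem z
      set P : ℕ → Prop := fun j => y j < f z with hP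
      have hP0 : P 0 := by rw [hP]; simp only [hy0]; exact haz
      classical
      set i₀ := Nat.findGreatest P n with hi₀
      have hi₀P : P i₀ := Nat.findGreatest_spec (Nat.zero_le n) hP0
      have hi₀le : i₀ ≤ n := Nat.findGreatest_le n
      have hi₀n : i₀ < n := by
        rcases lt_or_eq_of_le hi₀le with h | h
        · exact h
        · exfalso
          have : y n < f z := by rw [← h]; exact hi₀P
          rw [hyn] at this
          linarith
      refine ⟨⟨i₀, hi₀n⟩, hi₀P, ?_⟩
      by_contra hcon
      push_neg at hcon
      exact Nat.findGreatest_is_greatest (Nat.lt_succ_self i₀) hi₀n hcon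
    have hμE_sum : ∑ i, μ (E i) = 1 := by
      have h := measure_iUnion hEdisj hEmeas (μ := μ)
      rw [hEunion, measure_univ] at h
      rw [← tsum_fintype (L := SummationFilter.unconditional _)]
      exact h.symm
    have hμE_ne_top : ∀ i, μ (E i) ≠ ∞ := fun i => measure_ne_top μ _
    have hεn : ENNReal.ofReal (ε / n) ≠ 0 := by
      simp only [ne_eq, ENNReal.ofReal_eq_zero, not_le]
      positivity
    have hV : ∀ i : Fin n, ∃ V, E i ⊆ V ∧ IsOpen V ∧
        μ V < μ (E i) + ENNReal.ofReal (ε / n) :=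
      fun i => (E i).exists_isOpen_lt_add (hμE_ne_top i) hεn
    choose V hVsub hVopen hVlt using hV
    set U : Fin n → Set X := fun i => V i ∩ f ⁻¹' (Iio (y ((i:ℕ)+1) + ε)) with hU
    have hUopen : ∀ i, IsOpen (U i) :=
      fun i => (hVopen i).inter (isOpen_Iio.preimage f.continuous)
    have hEU : ∀ i, E i ⊆ U i := by
      intro i z hz
      refine ⟨hVsub i hz, ?_⟩
      simp only [mem_preimage, mem_Iio]
      have : f z ≤ y ((i:ℕ)+1) := hz.2
      linarith
    have hUcover : (univ : Set X) ⊆ ⋃ i, U i := by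
      rw [← hEunion]
      exact iUnion_mono hEU
    have hUlt : ∀ i, μ (U i) ≤ μ (E i) + ENNReal.ofReal (ε / n) :=
      fun i => le_trans (measure_mono inter_subset_left) (hVlt i).le
    have hμU_ne_top : ∀ i, μ (U i) ≠ ∞ := fun i => measure_ne_top μ _
    obtain ⟨po, hpo⟩ := PartitionOfUnity.exists_isSubordinate isClosed_univ U hUopen hUcover
    set H : Fin n → (X →ᵇ ℝ) := fun i => mkOfCompact (po i) with hH
    have hHapp : ∀ i z, H i z = po i z := fun i z => rfl
    have hHconst : ∀ z, ∑ i, H i z = 1 := by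
      intro z
      have := po.sum_eq_one (mem_univ z)
      rwa [finsum_eq_sum_of_fintype] at this
    have hHnonneg : ∀ i z, 0 ≤ H i z := fun i z => po.nonneg i z
    have hHle1 : ∀ i z, H i z ≤ 1 := fun i z => po.le_one i z
    have hHsupp : ∀ i, tsupport (⇑(H i)) ⊆ U i := fun i => hpo i
    have hfdecomp : f = ∑ i, H i * f := by
      ext z
      simp only [BoundedContinuousFunction.coe_sum, Finset.sum_apply,
        BoundedContinuousFunction.coe_mul, Pi.mul_apply]
      rw [← Finset.sum_mul, hHconst z, one_mul]
    have step5 : ∀ i : Fin n, Λ (H i * f) ≤ (y ((i:ℕ)+1) + ε) * Λ (H i) := by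
      intro i
      have hptwise : ∀ z, (H i * f) z ≤ ((y ((i:ℕ)+1) + ε) • H i) z := by
        intro z
        rcases eq_or_ne (H i z) 0 with h0 | h0
        · simp only [BoundedContinuousFunction.coe_mul, Pi.mul_apply, h0, zero_mul,
            BoundedContinuousFunction.coe_smul, Pi.smul_apply, smul_eq_mul, mul_zero, le_refl]
        · have hzU : z ∈ U i := hHsupp i (subset_tsupport _ h0)
          have hlt : f z < y ((i:ℕ)+1) + ε := hzU.2
          simp only [BoundedContinuousFunction.coe_mul, Pi.mul_apply,
            BoundedContinuousFunction.coe_smul, Pi.smul_apply, smul_eq_mul]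
          calc H i z * f z ≤ H i z * (y ((i:ℕ)+1) + ε) :=
                mul_le_mul_of_nonneg_left hlt.le (hHnonneg i z)
            _ = (y ((i:ℕ)+1) + ε) * H i z := mul_comm _ _
      calc Λ (H i * f) ≤ Λ ((y ((i:ℕ)+1) + ε) • H i) := lam_mono Λ hpos hptwise
        _ = (y ((i:ℕ)+1) + ε) * Λ (H i) := by rw [_root_.map_smul, smul_eq_mul]
    have hΛH_nonneg : ∀ i, 0 ≤ Λ (H i) := fun i => hpos _ (hHnonneg i)
    have step6 : ∀ i, Λ (H i) ≤ (μ (U i)).toReal := by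
      intro i
      set K : TopologicalSpace.Compacts X :=
        ⟨tsupport (⇑(H i)), (isClosed_tsupport _).isCompact⟩ with hK
      have hKU : (K : Set X) ⊆ U i := hHsupp i
      have h1 : ((rieszContentAux (nnFunctionalC Λ hpos) K : ℝ≥0) : ℝ≥0∞) ≤ μ (U i) := by
        have e1 : μ (U i) = (rContent Λ hpos).outerMeasure (U i) :=
          Content.measure_apply _ (hUopen i).measurableSet
        have e2 : (rContent Λ hpos).outerMeasure (U i)
            = (rContent Λ hpos).innerContent ⟨U i, hUopen i⟩ :=
          Content.outerMeasure_opens _ ⟨U i, hUopen i⟩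
        rw [e1, e2]
        exact (rContent Λ hpos).le_innerContent K _ hKU
      have h2 : Λ (H i) ≤ ((rieszContentAux (nnFunctionalC Λ hpos) K : ℝ≥0) : ℝ) := by
        have h3 : (Λ (H i)).toNNReal ≤ rieszContentAux (nnFunctionalC Λ hpos) K := by
          refine le_csInf (rieszContentAux_image_nonempty _ _) ?_
          rintro w ⟨f₀, hf₀, rfl⟩
          have h4 : Λ (H i) ≤ Λ (nnToReal f₀) := by
            refine lam_mono Λ hpos (fun z => ?_)
            by_cases hz : z ∈ tsupport (⇑(H i))
            · have h5 : (1:ℝ≥0) ≤ f₀ z := hf₀ z hz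
              have h6 : (1:ℝ) ≤ (f₀ z : ℝ) := by exact_mod_cast h5
              calc H i z ≤ 1 := hHle1 i z
                _ ≤ nnToReal f₀ z := h6
            · rw [image_eq_zero_of_notMem_tsupport hz]
              exact nnToReal_nonneg f₀ z
          calc (Λ (H i)).toNNReal ≤ (Λ (nnToReal f₀)).toNNReal := Real.toNNReal_mono h4
            _ = nnFunctional Λ hpos f₀ := rfl
        calc Λ (H i) = ((Λ (H i)).toNNReal : ℝ) :=
              (Real.coe_toNNReal _ (hΛH_nonneg i)).symm
          _ ≤ _ := NNReal.coe_le_coe.2 h3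
      refine h2.trans ?_
      have := ENNReal.toReal_mono (hμU_ne_top i) h1
      simpa using this
    set mE : Fin n → ℝ := fun i => (μ (E i)).toReal with hmE
    have hmE_nonneg : ∀ i, 0 ≤ mE i := fun i => ENNReal.toReal_nonneg
    have hmE_sum : ∑ i, mE i = 1 := by
      rw [hmE]
      rw [← ENNReal.toReal_sum (fun i _ => hμE_ne_top i), hμE_sum, ENNReal.toReal_one]
    have hμU_toReal : ∀ i, (μ (U i)).toReal ≤ mE i + ε / n := by
      intro i
      have h1 := ENNReal.toReal_mono
        (by exact ENNReal.add_ne_top.2 ⟨hμE_ne_top i, ENNReal.ofReal_ne_top⟩) (hUlt i)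
      rw [ENNReal.toReal_add (hμE_ne_top i) ENNReal.ofReal_ne_top,
        ENNReal.toReal_ofReal (by positivity)] at h1
      exact h1
    have hint : Integrable (⇑f) μ := f.integrable μ
    have hIntSum : ∑ i, ∫ z in E i, f z ∂μ = ∫ z, f z ∂μ := by
      have h := integral_iUnion hEmeas hEdisj hint.integrableOn
      rw [hEunion, setIntegral_univ] at h
      rw [← tsum_fintype (L := SummationFilter.unconditional _)]
      exact h.symm
    have hYsum : ∑ i : Fin n, y ((i:ℕ)+1) * mE i ≤ ∫ z, f z ∂μ + δ := by
      have hterm : ∀ i : Fin n, y ((i:ℕ)+1) * mE i ≤ (∫ z in E i, f z ∂μ) + δ * mE i := by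
        intro i
        have h1 : ∀ z ∈ E i, y ((i:ℕ)+1) ≤ f z + δ := by
          intro z hz
          have h2 : y (i:ℕ) < f z := hz.1
          have h3 : y ((i:ℕ)+1) = y i + δ := by simp only [hy]; push_cast; ring
          rw [h3]; linarith
        calc y ((i:ℕ)+1) * mE i = ∫ _ in E i, y ((i:ℕ)+1) ∂μ := by
              rw [setIntegral_const, smul_eq_mul, mul_comm]; rfl
          _ ≤ ∫ z in E i, (f z + δ) ∂μ := by
              refine setIntegral_mono_on (integrableOn_const)
                ((hint.add (integrable_const δ)).integrableOn) (hEmeas i) h1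
          _ = (∫ z in E i, f z ∂μ) + δ * mE i := by
              rw [integral_add hint.integrableOn integrableOn_const, setIntegral_const, smul_eq_mul, mul_comm]; rfl
      calc ∑ i : Fin n, y ((i:ℕ)+1) * mE i ≤ ∑ i : Fin n, ((∫ z in E i, f z ∂μ) + δ * mE i) :=
            Finset.sum_le_sum (fun i _ => hterm i)
        _ = ∫ z, f z ∂μ + δ := by
            rw [Finset.sum_add_distrib, hIntSum, ← Finset.mul_sum, hmE_sum, mul_one]
    set c : Fin n → ℝ := fun i => y ((i:ℕ)+1) + ε + (‖f‖ + ε) with hc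
    have hc_nonneg : ∀ i, 0 ≤ c i := by
      intro i
      have h1 : a ≤ y ((i:ℕ)+1) := by
        simp only [hy]
        have : (0:ℝ) ≤ ((i:ℕ)+1 : ℕ) * δ := by positivity
        push_cast at this ⊢
        linarith
      simp only [hc, ha] at *
      linarith
    have hc_le : ∀ i, c i ≤ 2 * ‖f‖ + 2 * ε := by
      intro i
      have h1 : y ((i:ℕ)+1) ≤ y n := hy_mono.monotone (Nat.succ_le_of_lt i.isLt)
      rw [hyn] at h1
      simp only [hc, hb] at *
      linarith
    have hsumLam : ∑ i, Λ (H i) = 1 := by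
      rw [← map_sum]
      have : (∑ i, H i) = (1 : X →ᵇ ℝ) := by
        ext z
        simp only [BoundedContinuousFunction.coe_sum, Finset.sum_apply,
          BoundedContinuousFunction.coe_one, Pi.one_apply]
        exact hHconst z
      rw [this, hone]
    have hcsum : ∑ i, c i ≤ n * (2 * ‖f‖ + 2 * ε) := by
      calc ∑ i, c i ≤ ∑ _i : Fin n, (2 * ‖f‖ + 2 * ε) :=
            Finset.sum_le_sum (fun i _ => hc_le i)
        _ = n * (2 * ‖f‖ + 2 * ε) := by
            rw [Finset.sum_const, Finset.card_univ, Fintype.card_fin, nsmul_eq_mul]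
    have main : Λ f ≤ ∑ i, c i * (mE i + ε / n) - (‖f‖ + ε) := by
      have perI : ∀ i : Fin n, (y ((i:ℕ)+1) + ε) * Λ (H i)
          ≤ c i * (mE i + ε / n) - (‖f‖ + ε) * Λ (H i) := by
        intro i
        have h1 : Λ (H i) ≤ mE i + ε / n := (step6 i).trans (hμU_toReal i)
        have h2 : c i * Λ (H i) ≤ c i * (mE i + ε / n) :=
          mul_le_mul_of_nonneg_left h1 (hc_nonneg i)
        have h3 : (y ((i:ℕ)+1) + ε) * Λ (H i)
            = c i * Λ (H i) - (‖f‖ + ε) * Λ (H i) := by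
          simp only [hc]; ring
        rw [h3]
        exact sub_le_sub_right h2 _
      calc Λ f = ∑ i, Λ (H i * f) := by rw [← map_sum, ← hfdecomp]
        _ ≤ ∑ i : Fin n, (y ((i:ℕ)+1) + ε) * Λ (H i) := Finset.sum_le_sum (fun i _ => step5 i)
        _ ≤ ∑ i, (c i * (mE i + ε / n) - (‖f‖ + ε) * Λ (H i)) :=
            Finset.sum_le_sum (fun i _ => perI i)
        _ = ∑ i, c i * (mE i + ε / n) - (‖f‖ + ε) := by
            rw [Finset.sum_sub_distrib, ← Finset.mul_sum, hsumLam, mul_one]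
    have expand : ∑ i, c i * (mE i + ε / n)
        ≤ (∑ i : Fin n, y ((i:ℕ)+1) * mE i) + (ε + ‖f‖ + ε) + ε * (2 * ‖f‖ + 2 * ε) := by
      have h1 : ∑ i, c i * (mE i + ε / n) = ∑ i, c i * mE i + (∑ i, c i) * (ε / n) := by
        rw [Finset.sum_mul, ← Finset.sum_add_distrib]
        exact Finset.sum_congr rfl fun i _ => by ring
      have h2 : ∑ i, c i * mE i
          = ∑ i : Fin n, y ((i:ℕ)+1) * mE i + (ε + ‖f‖ + ε) * ∑ i, mE i := by
        rw [Finset.mul_sum, ← Finset.sum_add_distrib]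
        exact Finset.sum_congr rfl fun i _ => by simp only [hc]; ring
      have h3 : (∑ i, c i) * (ε / n) ≤ ε * (2 * ‖f‖ + 2 * ε) := by
        have hεn0 : 0 ≤ ε / n := by positivity
        calc (∑ i, c i) * (ε / n) ≤ (n * (2 * ‖f‖ + 2 * ε)) * (ε / n) :=
              mul_le_mul_of_nonneg_right hcsum hεn0
          _ = ε * (2 * ‖f‖ + 2 * ε) := by field_simp
      rw [h1, h2, hmE_sum, mul_one]
      linarith
    have hεsq : ε * ε ≤ ε := by nlinarith
    have hnormf : 0 ≤ ‖f‖ := norm_nonneg f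
    calc Λ f ≤ ∑ i, c i * (mE i + ε / n) - (‖f‖ + ε) := main
      _ ≤ (∑ i : Fin n, y ((i:ℕ)+1) * mE i) + (ε + ‖f‖ + ε) + ε * (2 * ‖f‖ + 2 * ε) - (‖f‖ + ε) := by
          linarith
      _ ≤ (∫ z, f z ∂μ + δ) + (ε + ‖f‖ + ε) + ε * (2 * ‖f‖ + 2 * ε) - (‖f‖ + ε) := by
          linarith
      _ ≤ ∫ z, f z ∂μ + ε * (4 + 2 * ‖f‖) := by nlinarith
  refine le_of_forall_pos_le_add ?_
  intro d hd
  have hC : (0:ℝ) < 4 + 2 * ‖f‖ := by positivity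
  set ε : ℝ := min 1 (d / (4 + 2 * ‖f‖)) with hε
  have hε0 : 0 < ε := lt_min one_pos (div_pos hd hC)
  calc Λ f ≤ ∫ z, f z ∂(rMeasure Λ hpos) + ε * (4 + 2 * ‖f‖) :=
        key ε hε0 (min_le_left _ _)
    _ ≤ ∫ z, f z ∂(rMeasure Λ hpos) + d := by
        have h1 : ε ≤ d / (4 + 2 * ‖f‖) := min_le_right _ _
        have h2 : ε * (4 + 2 * ‖f‖) ≤ (d / (4 + 2 * ‖f‖)) * (4 + 2 * ‖f‖) :=
          mul_le_mul_of_nonneg_right h1 hC.le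
        rw [div_mul_cancel₀ _ hC.ne'] at h2
        linarith

theorem riesz_repr (hpos : ∀ f : X →ᵇ ℝ, (∀ z, 0 ≤ f z) → 0 ≤ Λ f) (hone : Λ 1 = 1) :
    ∃ μ : Measure X, IsProbabilityMeasure μ ∧ ∀ f : X →ᵇ ℝ, ∫ z, f z ∂μ = Λ f := by
  refine ⟨rMeasure Λ hpos, ⟨rMeasure_univ Λ hpos hone⟩, fun f => ?_⟩
  haveI : IsProbabilityMeasure (rMeasure Λ hpos) := ⟨rMeasure_univ Λ hpos hone⟩
  have h1 := riesz_le Λ hpos hone f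
  have h2 := riesz_le Λ hpos hone (-f)
  rw [map_neg] at h2
  have h3 : ∫ z, (-f) z ∂(rMeasure Λ hpos) = - ∫ z, f z ∂(rMeasure Λ hpos) := by
    simp only [BoundedContinuousFunction.coe_neg, Pi.neg_apply]
    exact integral_neg _
  rw [h3] at h2
  linarith

end KBaux

open KBaux

/-- Let `X` be a nonempty compact metric space, `T : X → X` continuous, `g : X → ℝ`
continuous and `x ∈ X`. If `limsup_{n → ∞} (1/n) ∑_{i=0}^{n-1} g(Tⁱ x) ≥ 0`, then there is a
`T`-invariant Borel probability measure `μ` on `X` with `∫ g dμ ≥ 0`. -/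
theorem exists_invariant_measure_integral_nonneg
    {X : Type*} [MetricSpace X] [CompactSpace X] [Nonempty X]
    [MeasurableSpace X] [BorelSpace X]
    (T : X → X) (hT : Continuous T) (g : X → ℝ) (hg : Continuous g) (x : X)
    (h : 0 ≤ limsup (fun n : ℕ =>
      (1 / (n : ℝ)) * ∑ i ∈ Finset.range n, g (T^[i] x)) atTop) :
    ∃ μ : Measure X, IsProbabilityMeasure μ ∧ Measure.map T μ = μ ∧ 0 ≤ ∫ y, g y ∂μ := by
  classical
  set gb : X →ᵇ ℝ := mkOfCompact ⟨g, hg⟩ with hgb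
  set u : ℕ → ℝ := fun n => (1 / (n : ℝ)) * ∑ i ∈ Finset.range n, g (T^[i] x) with hu
  set s : (X →ᵇ ℝ) → ℕ → ℝ :=
    fun f n => (1 / (n : ℝ)) * ∑ i ∈ Finset.range n, f (T^[i] x) with hs
  have hbound : ∀ (f : X →ᵇ ℝ) (n : ℕ), |s f n| ≤ ‖f‖ := by
    intro f n
    rcases Nat.eq_zero_or_pos n with h0 | h0
    · simp only [hs, h0, Nat.cast_zero, div_zero, Finset.range_zero, Finset.sum_empty, mul_zero,
        abs_zero]
      exact norm_nonneg f
    have hn : (0:ℝ) < n := by exact_mod_cast h0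
    have h1 : |∑ i ∈ Finset.range n, f (T^[i] x)| ≤ n * ‖f‖ := by
      calc |∑ i ∈ Finset.range n, f (T^[i] x)|
          ≤ ∑ i ∈ Finset.range n, |f (T^[i] x)| := Finset.abs_sum_le_sum_abs _ _
        _ ≤ ∑ _i ∈ Finset.range n, ‖f‖ :=
            Finset.sum_le_sum fun i _ => f.norm_coe_le_norm _
        _ = n * ‖f‖ := by rw [Finset.sum_const, Finset.card_range, nsmul_eq_mul]
    simp only [hs]
    rw [abs_mul, abs_of_nonneg (by positivity : (0:ℝ) ≤ 1 / (n:ℝ))]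
    calc (1 / (n:ℝ)) * |∑ i ∈ Finset.range n, f (T^[i] x)|
        ≤ (1 / (n:ℝ)) * (n * ‖f‖) := by
          exact mul_le_mul_of_nonneg_left h1 (by positivity)
      _ = ‖f‖ := by field_simp
  set L : ℝ := limsup u atTop with hL
  have hcob : IsCoboundedUnder (· ≤ ·) atTop u := by
    refine IsBoundedUnder.isCoboundedUnder_le ⟨-‖gb‖, eventually_map.2
      (Eventually.of_forall fun n => ?_)⟩
    have h1 : |u n| ≤ ‖gb‖ := by
      have : u n = s gb n := by
        simp only [hu, hs, hgb]
        rfl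
      rw [this]
      exact hbound gb n
    have := abs_le.1 h1
    simpa using this.1
  have hfreq : ∀ m : ℕ, ∃ᶠ k in atTop, L - 1/((m:ℝ)+1) < u k := by
    intro m
    refine frequently_lt_of_lt_limsup hcob ?_
    rw [← hL]
    have : (0:ℝ) < 1/((m:ℝ)+1) := by positivity
    linarith
  obtain ⟨φ, hφmono, hφ⟩ := extraction_forall_of_frequently hfreq
  set 𝒰 : Ultrafilter ℕ := Ultrafilter.of atTop with hUdef
  have hUle : (𝒰 : Filter ℕ) ≤ atTop := Ultrafilter.of_le _
  set sφ : (X →ᵇ ℝ) → ℕ → ℝ := fun f k => s f (φ k) with hsφ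
  have hex : ∀ f : X →ᵇ ℝ, ∃ ℓ, Tendsto (sφ f) (𝒰 : Filter ℕ) (𝓝 ℓ) := by
    intro f
    have hmem : ∀ k, sφ f k ∈ Icc (-‖f‖) ‖f‖ := by
      intro k
      have := abs_le.1 (hbound f (φ k))
      exact ⟨this.1, this.2⟩
    have hle : (𝒰.map (sφ f) : Filter ℝ) ≤ 𝓟 (Icc (-‖f‖) ‖f‖) := by
      rw [le_principal_iff]
      exact Filter.mem_map.2 (Eventually.of_forall hmem)
    obtain ⟨ℓ, -, hℓ⟩ := isCompact_Icc.ultrafilter_le_nhds (𝒰.map (sφ f)) hle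
    exact ⟨ℓ, hℓ⟩
  choose Lam hLam using hex
  have hadd : ∀ f h' : X →ᵇ ℝ, Lam (f + h') = Lam f + Lam h' := by
    intro f h'
    refine tendsto_nhds_unique (hLam _) ?_
    have he : sφ (f + h') = fun k => sφ f k + sφ h' k := by
      funext k
      simp only [hsφ, hs, BoundedContinuousFunction.coe_add, Pi.add_apply,
        Finset.sum_add_distrib, mul_add]
    rw [he]
    exact (hLam f).add (hLam h')
  have hsmul : ∀ (c : ℝ) (f : X →ᵇ ℝ), Lam (c • f) = c * Lam f := by
    intro c f
    refine tendsto_nhds_unique (hLam _) ?_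
    have he : sφ (c • f) = fun k => c * sφ f k := by
      funext k
      simp only [hsφ, hs, BoundedContinuousFunction.coe_smul, Pi.smul_apply, smul_eq_mul,
        ← Finset.mul_sum]
      ring
    rw [he]
    exact (hLam f).const_mul c
  set ΛL : (X →ᵇ ℝ) →ₗ[ℝ] ℝ :=
    { toFun := Lam
      map_add' := hadd
      map_smul' := hsmul } with hΛL
  have hΛLapp : ∀ f, ΛL f = Lam f := fun f => rfl
  have hpos : ∀ f : X →ᵇ ℝ, (∀ z, 0 ≤ f z) → 0 ≤ ΛL f := by
    intro f hf
    rw [hΛLapp]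
    refine ge_of_tendsto (hLam f) (Eventually.of_forall fun k => ?_)
    simp only [hsφ, hs]
    have h1 : (0:ℝ) ≤ ∑ i ∈ Finset.range (φ k), f (T^[i] x) :=
      Finset.sum_nonneg fun i _ => hf _
    positivity
  have hone : ΛL 1 = 1 := by
    rw [hΛLapp]
    refine tendsto_nhds_unique (hLam 1) ?_
    have h1 : ∀ᶠ k in (𝒰 : Filter ℕ), sφ (1 : X →ᵇ ℝ) k = 1 := by
      refine hUle ?_
      filter_upwards [eventually_ge_atTop 1] with k hk
      have hφk : 1 ≤ φ k := le_trans hk hφmono.le_apply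
      have hφk' : (0:ℝ) < (φ k : ℝ) := by exact_mod_cast hφk
      simp only [hsφ, hs, BoundedContinuousFunction.coe_one, Pi.one_apply, Finset.sum_const,
        Finset.card_range, nsmul_eq_mul, mul_one]
      field_simp
    have h2 : sφ (1 : X →ᵇ ℝ) =ᶠ[(𝒰 : Filter ℕ)] fun _ => 1 := h1
    exact Tendsto.congr' h2.symm tendsto_const_nhds
  have hcomp_app : ∀ (f : X →ᵇ ℝ) (z : X), (f.compContinuous ⟨T, hT⟩) z = f (T z) :=
    fun f z => rfl
  have hinv : ∀ f : X →ᵇ ℝ, Lam (f.compContinuous ⟨T, hT⟩) = Lam f := by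
    intro f
    have hdiff : ∀ n : ℕ, s (f.compContinuous ⟨T, hT⟩) n
        = s f n + (1/(n:ℝ)) * (f (T^[n] x) - f x) := by
      intro n
      have h1 : ∀ i : ℕ, (f.compContinuous ⟨T, hT⟩) (T^[i] x) = f (T^[i+1] x) := by
        intro i
        rw [hcomp_app, Function.iterate_succ_apply' T i x]
      have h2 : ∑ i ∈ Finset.range n, f (T^[i+1] x)
          = (∑ i ∈ Finset.range n, f (T^[i] x)) + f (T^[n] x) - f x := by
        have h3 := Finset.sum_range_succ (fun i => f (T^[i] x)) n
        have h4 := Finset.sum_range_succ' (fun i => f (T^[i] x)) n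
        simp only [Function.iterate_zero_apply] at h3 h4
        rw [h3] at h4
        linarith
      simp only [hs]
      rw [Finset.sum_congr rfl (fun i _ => h1 i), h2]
      ring
    have h2 : Tendsto (fun k => (1/((φ k:ℕ):ℝ)) * (f (T^[φ k] x) - f x)) atTop (𝓝 0) := by
      have hb : ∀ k, |(1/((φ k:ℕ):ℝ)) * (f (T^[φ k] x) - f x)| ≤ (1/((φ k:ℕ):ℝ)) * (2*‖f‖) := by
        intro k
        rw [abs_mul, abs_of_nonneg (by positivity : (0:ℝ) ≤ 1/((φ k:ℕ):ℝ))]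
        refine mul_le_mul_of_nonneg_left ?_ (by positivity)
        calc |f (T^[φ k] x) - f x| ≤ |f (T^[φ k] x)| + |f x| := abs_sub _ _
          _ ≤ ‖f‖ + ‖f‖ := add_le_add (f.norm_coe_le_norm _) (f.norm_coe_le_norm _)
          _ = 2*‖f‖ := by ring
      have hz : Tendsto (fun k => (1/((φ k:ℕ):ℝ)) * (2*‖f‖)) atTop (𝓝 0) := by
        have h3 : Tendsto (fun k => (1/((φ k:ℕ):ℝ))) atTop (𝓝 0) :=
          tendsto_one_div_atTop_nhds_zero_nat.comp hφmono.tendsto_atTop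
        simpa using h3.mul_const (2*‖f‖)
      exact squeeze_zero_norm hb hz
    refine tendsto_nhds_unique (hLam _) ?_
    have he : sφ (f.compContinuous ⟨T, hT⟩)
        = fun k => sφ f k + (1/((φ k:ℕ):ℝ)) * (f (T^[φ k] x) - f x) := by
      funext k
      exact hdiff (φ k)
    rw [he]
    have := (hLam f).add (h2.mono_left hUle)
    simpa using this
  have hgb0 : 0 ≤ Lam gb := by
    have hmlb : ∀ m : ℕ, L - 1/((m:ℝ)+1) ≤ Lam gb := by
      intro m
      refine ge_of_tendsto (hLam gb) ?_
      refine hUle ?_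
      filter_upwards [eventually_ge_atTop m] with k hk
      have h1 : L - 1/((k:ℝ)+1) < u (φ k) := hφ k
      have h2 : (1:ℝ)/((k:ℝ)+1) ≤ 1/((m:ℝ)+1) := by
        have : ((m:ℝ)+1) ≤ ((k:ℝ)+1) := by
          have : (m:ℝ) ≤ k := by exact_mod_cast hk
          linarith
        exact one_div_le_one_div_of_le (by positivity) this
      have h3 : u (φ k) = sφ gb k := by
        simp only [hu, hsφ, hs, hgb]
        rfl
      rw [h3] at h1
      linarith
    have h4 : Tendsto (fun m : ℕ => L - 1/((m:ℝ)+1)) atTop (𝓝 L) := by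
      have h5 := tendsto_one_div_add_atTop_nhds_zero_nat (𝕜 := ℝ)
      have := tendsto_const_nhds (x := L) (f := atTop (α := ℕ))
      simpa using this.sub h5
    have h5 : L ≤ Lam gb := le_of_tendsto h4 (Eventually.of_forall hmlb)
    have h6 : 0 ≤ L := h
    linarith
  obtain ⟨μ, hμprob, hμrepr⟩ := riesz_repr ΛL hpos hone
  haveI := hμprob
  refine ⟨μ, hμprob, ?_, ?_⟩
  · haveI : IsProbabilityMeasure (μ.map T) := Measure.isProbabilityMeasure_map hT.aemeasurable
    refine ext_of_forall_lintegral_eq_of_IsFiniteMeasure fun fn => ?_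
    have hfTcont : Continuous fun z => (fn (T z) : ℝ≥0∞) :=
      ENNReal.continuous_coe.comp (fn.continuous.comp hT)
    have e1 : ∫⁻ z, fn z ∂(μ.map T) = ∫⁻ z, fn (T z) ∂μ :=
      lintegral_map (measurable_coe_nnreal_ennreal.comp fn.continuous.measurable) hT.measurable
    have hint1 : Integrable (fun z => ((fn (T z)) : ℝ)) μ := by
      have : (fun z => ((fn (T z)) : ℝ))
          = ⇑((nnToReal fn).compContinuous ⟨T, hT⟩) := rfl
      rw [this]
      exact ((nnToReal fn).compContinuous ⟨T, hT⟩).integrable μ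
    have hint2 : Integrable (fun z => ((fn z) : ℝ)) μ := by
      have : (fun z => ((fn z) : ℝ)) = ⇑(nnToReal fn) := rfl
      rw [this]
      exact (nnToReal fn).integrable μ
    have e2 : ∫⁻ z, fn (T z) ∂μ = ENNReal.ofReal (∫ z, ((fn (T z)) : ℝ) ∂μ) :=
      lintegral_coe_eq_integral (fun z => fn (T z)) hint1
    have e3 : ∫⁻ z, fn z ∂μ = ENNReal.ofReal (∫ z, ((fn z) : ℝ) ∂μ) :=
      lintegral_coe_eq_integral (fun z => fn z) hint2
    rw [e1, e2, e3]
    congr 1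
    have e4 : ∫ z, ((fn (T z)) : ℝ) ∂μ = ∫ z, ((nnToReal fn).compContinuous ⟨T, hT⟩) z ∂μ := rfl
    have e5 : ∫ z, ((fn z) : ℝ) ∂μ = ∫ z, (nnToReal fn) z ∂μ := rfl
    rw [e4, e5, hμrepr, hμrepr]
    exact hinv (nnToReal fn)
  · have : ∫ y, g y ∂μ = ∫ y, gb y ∂μ := rfl
    rw [this, hμrepr gb]
    exact hgb0
end
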